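/- arXiv:1805.02150 — 4 statements merged into one kernel-verified Lean document; each statement's English description precedes it below -/
import Mathlib

section
/- Exact integration identity for the periodic unfolding operator in the bulk: Let d ≥ 1, ε > 0, let Ξ ⊆ ℤ^d be a finite set, let S ⊆ [0,1)^d be Lebesgue measurable, and let f : ℝ^d → ℝ be Lebesgue integrable on the set A = ⋃_{ξ∈Ξ}(εξ + εS). Then the unfolded function (x,y) ↦ f(ε⌊x/ε⌋ + εy) is integrable on Ω̃_ε(Ξ) × S with respect to the product Lebesgue measure, where Ω̃_ε(Ξ) = ⋃_{ξ∈Ξ}(εξ + ε[0,1)^d), and ∫_{Ω̃_ε(Ξ)} ∫_S f(ε⌊x/ε⌋ + εy) dy dx = ∫_A f(x) dx. -/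
open MeasureTheory Set

-- affine map
private lemma aff_eq (d : ℕ) (ε : ℝ) (c : Fin d → ℝ) :
    (fun y : Fin d → ℝ => fun i => c i + ε * y i) = fun y => c + ε • y := by
  funext y; funext i; simp [Pi.add_apply, Pi.smul_apply, smul_eq_mul]

private lemma aff_inj (d : ℕ) {ε : ℝ} (hε : 0 < ε) (c : Fin d → ℝ) :
    Function.Injective (fun y : Fin d → ℝ => fun i => c i + ε * y i) := by
  intro a b hab
  funext i
  have := congrFun hab i
  simp only at this
  nlinarith [this]

private lemma aff_deriv (d : ℕ) (ε : ℝ) (c : Fin d → ℝ) (y : Fin d → ℝ) :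
    HasFDerivAt (fun y : Fin d → ℝ => fun i => c i + ε * y i)
      (ε • ContinuousLinearMap.id ℝ (Fin d → ℝ)) y := by
  rw [aff_eq]
  exact ((hasFDerivAt_id y).const_smul ε).const_add c

private lemma aff_det (d : ℕ) (ε : ℝ) :
    (ε • ContinuousLinearMap.id ℝ (Fin d → ℝ)).det = ε ^ d := by
  rw [ContinuousLinearMap.det, ContinuousLinearMap.coe_smul, ContinuousLinearMap.coe_id,
    LinearMap.det_smul, Module.finrank_fin_fun, LinearMap.det_id, mul_one]

/-- change of variables for the cell map -/
private lemma cov (d : ℕ) {ε : ℝ} (hε : 0 < ε) (c : Fin d → ℝ) {s : Set (Fin d → ℝ)}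
    (hs : MeasurableSet s) (g : (Fin d → ℝ) → ℝ)
    (hg : IntegrableOn g ((fun y : Fin d → ℝ => fun i => c i + ε * y i) '' s)) :
    IntegrableOn (fun y => g fun i => c i + ε * y i) s ∧
    ∫ x in (fun y : Fin d → ℝ => fun i => c i + ε * y i) '' s, g x
      = ε ^ d * ∫ y in s, g fun i => c i + ε * y i := by
  have hder : ∀ y ∈ s, HasFDerivWithinAt (fun y : Fin d → ℝ => fun i => c i + ε * y i)
      (ε • ContinuousLinearMap.id ℝ (Fin d → ℝ)) s y :=
    fun y _ => (aff_deriv d ε c y).hasFDerivWithinAt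
  have hinj := (aff_inj d hε c).injOn (s := s)
  have hiff := integrableOn_image_iff_integrableOn_abs_det_fderiv_smul volume hs hder hinj g
  have habs : |(ε • ContinuousLinearMap.id ℝ (Fin d → ℝ)).det| = ε ^ d := by
    rw [aff_det]; exact abs_of_pos (pow_pos hε d)
  have hne : (ε ^ d : ℝ) ≠ 0 := (pow_pos hε d).ne'
  constructor
  · have h1 : IntegrableOn
        (fun x => |(ε • ContinuousLinearMap.id ℝ (Fin d → ℝ)).det| •
          g ((fun y : Fin d → ℝ => fun i => c i + ε * y i) x)) s := hiff.mp hg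
    simp only [habs, smul_eq_mul] at h1
    have := h1.const_mul (ε ^ d)⁻¹
    simpa [IntegrableOn, ← mul_assoc, inv_mul_cancel₀ hne] using this
  · rw [integral_image_eq_integral_abs_det_fderiv_smul volume hs hder hinj g]
    simp only [habs, smul_eq_mul]
    rw [integral_const_mul]

private lemma floor_mem (d : ℕ) {ε : ℝ} (hε : 0 < ε) (ξ : Fin d → ℤ) {x : Fin d → ℝ}
    (hx : x ∈ Set.pi Set.univ fun i => Set.Ico (ε * (ξ i : ℝ)) (ε * (ξ i : ℝ) + ε)) :
    ∀ i, ⌊x i / ε⌋ = ξ i := by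
  intro i
  have h := hx i (mem_univ i)
  rw [Int.floor_eq_iff]
  constructor
  · rw [le_div_iff₀ hε]; nlinarith [h.1]
  · rw [div_lt_iff₀ hε]; nlinarith [h.2]

private lemma image_cell (d : ℕ) {ε : ℝ} (hε : 0 < ε) (c : Fin d → ℝ) :
    ((fun y : Fin d → ℝ => fun i => c i + ε * y i) ''
        (Set.pi Set.univ fun _ => Set.Ico (0 : ℝ) 1))
      = Set.pi Set.univ fun i => Set.Ico (c i) (c i + ε) := by
  ext x
  constructor
  · rintro ⟨y, hy, rfl⟩ i _
    have h := hy i (mem_univ i)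
    show c i + ε * y i ∈ Set.Ico (c i) (c i + ε)
    constructor
    · nlinarith [h.1]
    · nlinarith [h.2]
  · intro hx
    refine ⟨fun i => (x i - c i) / ε, fun i _ => ?_, ?_⟩
    · have h := hx i (mem_univ i)
      constructor
      · exact div_nonneg (by linarith [h.1]) hε.le
      · rw [div_lt_one hε]; linarith [h.2]
    · funext i
      field_simp
      ring

private lemma image_meas (d : ℕ) {ε : ℝ} (hε : 0 < ε) (c : Fin d → ℝ) {s : Set (Fin d → ℝ)}
    (hs : MeasurableSet s) :
    MeasurableSet ((fun y : Fin d → ℝ => fun i => c i + ε * y i) '' s) := by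
  have hne := hε.ne'
  have himg : ((fun y : Fin d → ℝ => fun i => c i + ε * y i) '' s)
      = (fun x : Fin d → ℝ => fun i => (x i - c i) / ε) ⁻¹' s := by
    ext x
    constructor
    · rintro ⟨y, hy, rfl⟩
      have h2 : (fun x : Fin d → ℝ => fun i => (x i - c i) / ε)
          ((fun y : Fin d → ℝ => fun i => c i + ε * y i) y) = y := by
        funext i; simp only; field_simp; ring
      have h3 : (fun x : Fin d → ℝ => fun i => (x i - c i) / ε)
          ((fun y : Fin d → ℝ => fun i => c i + ε * y i) y) ∈ s := by
        rw [h2]; exact hy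
      exact h3
    · intro hx
      exact ⟨_, hx, by funext i; field_simp; ring⟩
  rw [himg]
  exact (measurable_pi_lambda _ fun i =>
    ((measurable_pi_apply i).sub measurable_const).div_const ε) hs

/-- Exact integration identity for the periodic unfolding operator in the bulk. -/
theorem unfolding_bulk_integral_identity
    (d : ℕ) (hd : 1 ≤ d) (ε : ℝ) (hε : 0 < ε)
    (Ξ : Finset (Fin d → ℤ)) (S : Set (Fin d → ℝ))
    (hSmeas : MeasurableSet S)
    (hSsub : S ⊆ Set.pi Set.univ fun _ => Set.Ico (0 : ℝ) 1)
    (f : (Fin d → ℝ) → ℝ)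
    (hf : IntegrableOn f
      (⋃ ξ ∈ Ξ, (fun y : Fin d → ℝ => fun i => ε * (ξ i : ℝ) + ε * y i) '' S)) :
    IntegrableOn
      (fun p : (Fin d → ℝ) × (Fin d → ℝ) =>
        f fun i => ε * (⌊p.1 i / ε⌋ : ℝ) + ε * p.2 i)
      ((⋃ ξ ∈ Ξ, (fun y : Fin d → ℝ => fun i => ε * (ξ i : ℝ) + ε * y i) ''
          (Set.pi Set.univ fun _ => Set.Ico (0 : ℝ) 1)) ×ˢ S) ∧
    (∫ x in (⋃ ξ ∈ Ξ, (fun y : Fin d → ℝ => fun i => ε * (ξ i : ℝ) + ε * y i) ''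
          (Set.pi Set.univ fun _ => Set.Ico (0 : ℝ) 1)),
        ∫ y in S, f fun i => ε * (⌊x i / ε⌋ : ℝ) + ε * y i)
      = ∫ x in (⋃ ξ ∈ Ξ, (fun y : Fin d → ℝ => fun i => ε * (ξ i : ℝ) + ε * y i) '' S),
          f x := by
  classical
  set C : (Fin d → ℤ) → Set (Fin d → ℝ) :=
    fun ξ => Set.pi Set.univ fun i => Set.Ico (ε * (ξ i : ℝ)) (ε * (ξ i : ℝ) + ε) with hC
  have hCmeas : ∀ ξ, MeasurableSet (C ξ) :=
    fun ξ => MeasurableSet.univ_pi fun i => measurableSet_Ico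
  have himg : ∀ ξ : Fin d → ℤ,
      (fun y : Fin d → ℝ => fun i => ε * (ξ i : ℝ) + ε * y i) ''
        (Set.pi Set.univ fun _ => Set.Ico (0 : ℝ) 1) = C ξ :=
    fun ξ => image_cell d hε (fun i => ε * (ξ i : ℝ))
  -- integrability of f on each cell image
  have hfA : ∀ ξ ∈ Ξ, IntegrableOn f
      ((fun y : Fin d → ℝ => fun i => ε * (ξ i : ℝ) + ε * y i) '' S) :=
    fun ξ hξ => hf.mono_set (fun x hx => Set.mem_biUnion hξ hx)
  have hcov : ∀ ξ ∈ Ξ,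
      IntegrableOn (fun y => f fun i => ε * (ξ i : ℝ) + ε * y i) S ∧
      ∫ x in (fun y : Fin d → ℝ => fun i => ε * (ξ i : ℝ) + ε * y i) '' S, f x
        = ε ^ d * ∫ y in S, f fun i => ε * (ξ i : ℝ) + ε * y i :=
    fun ξ hξ => cov d hε (fun i => ε * (ξ i : ℝ)) hSmeas f (hfA ξ hξ)
  have hAmeas : ∀ ξ : Fin d → ℤ, MeasurableSet
      ((fun y : Fin d → ℝ => fun i => ε * (ξ i : ℝ) + ε * y i) '' S) :=
    fun ξ => image_meas d hε (fun i => ε * (ξ i : ℝ)) hSmeas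
  have hAsub : ∀ ξ : Fin d → ℤ,
      ((fun y : Fin d → ℝ => fun i => ε * (ξ i : ℝ) + ε * y i) '' S) ⊆ C ξ := by
    intro ξ
    rw [← himg ξ]
    exact Set.image_mono hSsub
  have hCdisj : ∀ ξ ξ' : Fin d → ℤ, ξ ≠ ξ' → Disjoint (C ξ) (C ξ') := by
    intro ξ ξ' hne
    rw [Set.disjoint_left]
    intro x hx hx'
    exact hne (funext fun i => (floor_mem d hε ξ hx i).symm.trans (floor_mem d hε ξ' hx' i))
  -- volume of a cell
  have hCvol : ∀ ξ : Fin d → ℤ, volume (C ξ) = ENNReal.ofReal ε ^ d := by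
    intro ξ
    rw [hC]
    rw [volume_pi_pi]
    simp [Real.volume_Ico]
  have hCfin : ∀ ξ : Fin d → ℤ, volume (C ξ) < ⊤ := by
    intro ξ; rw [hCvol]
    exact ENNReal.pow_lt_top ENNReal.ofReal_lt_top
  have hCtoReal : ∀ ξ : Fin d → ℤ, (volume (C ξ)).toReal = ε ^ d := by
    intro ξ; rw [hCvol, ENNReal.toReal_pow, ENNReal.toReal_ofReal hε.le]
  constructor
  · -- product integrability
    simp only [himg, Set.iUnion_prod_const]
    rw [integrableOn_finset_iUnion]
    intro ξ hξ
    haveI : IsFiniteMeasure (volume.restrict (C ξ)) :=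
      ⟨by rw [Measure.restrict_apply_univ]; exact hCfin ξ⟩
    have hbase : IntegrableOn
        (fun p : (Fin d → ℝ) × (Fin d → ℝ) => f fun i => ε * (ξ i : ℝ) + ε * p.2 i)
        ((C ξ) ×ˢ S) := by
      rw [IntegrableOn, Measure.volume_eq_prod, ← Measure.prod_restrict]
      have := (integrable_const (1 : ℝ) (μ := volume.restrict (C ξ))).mul_prod
        ((hcov ξ hξ).1)
      simpa using this
    refine hbase.congr_fun ?_ ((hCmeas ξ).prod hSmeas)
    rintro ⟨x, y⟩ ⟨hx, hy⟩
    have hfl := floor_mem d hε ξ hx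
    simp only [hfl]
  · -- the integral identity
    simp only [himg]
    rw [integral_biUnion_finset Ξ (fun ξ _ => hCmeas ξ)
        (fun ξ _ ξ' _ hne => hCdisj ξ ξ' hne)
        (fun ξ hξ => ?_), integral_biUnion_finset Ξ (fun ξ _ => hAmeas ξ)
        (fun ξ _ ξ' _ hne => ((hCdisj ξ ξ' hne).mono (hAsub ξ) (hAsub ξ')))
        hfA]
    · refine Finset.sum_congr rfl fun ξ hξ => ?_
      have h1 : ∀ x ∈ C ξ,
          (∫ y in S, f fun i => ε * (⌊x i / ε⌋ : ℝ) + ε * y i)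
            = ∫ y in S, f fun i => ε * (ξ i : ℝ) + ε * y i := by
        intro x hx
        have hfl := floor_mem d hε ξ hx
        simp only [hfl]
      rw [setIntegral_congr_fun (hCmeas ξ) h1, setIntegral_const, measureReal_def, hCtoReal ξ,
        (hcov ξ hξ).2, smul_eq_mul]
    · -- integrability of the inner-integral function on C ξ
      haveI : IsFiniteMeasure (volume.restrict (C ξ)) :=
        ⟨by rw [Measure.restrict_apply_univ]; exact hCfin ξ⟩
      have hconst : IntegrableOn
          (fun _ : Fin d → ℝ => (∫ y in S, f fun i => ε * (ξ i : ℝ) + ε * y i))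
          (C ξ) := (integrableOn_const_iff).mpr (Or.inr (hCfin ξ))
      refine hconst.congr_fun ?_ (hCmeas ξ)
      intro x hx
      have hfl := floor_mem d hε ξ hx
      simp only [hfl]
end

section
/- Strong L^p convergence of unfolded sequences on the whole space: Let d ≥ 1 and 1 ≤ p < ∞. Let ψ ∈ L^p(ℝ^d) and suppose that for each ε > 0 a function ψ^ε ∈ L^p(ℝ^d) is given with ‖ψ^ε − ψ‖_{L^p(ℝ^d)} → 0 as ε → 0⁺. Then ∫_{ℝ^d} ∫_{[0,1)^d} |ψ^ε(ε⌊x/ε⌋ + εy) − ψ(x)|^p dy dx → 0 as ε → 0⁺. (In particular, taking ψ^ε = ψ, the unfolding of any fixed L^p function converges to it strongly in L^p(ℝ^d × [0,1)^d).) -/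
open MeasureTheory Set Filter Topology
open scoped ENNReal NNReal

variable {d : ℕ}

/-- the cell map -/
noncomputable def cellOf (ε : ℝ) (x : Fin d → ℝ) : Fin d → ℤ := fun i => ⌊x i / ε⌋

noncomputable def unfoldPt (ε : ℝ) (x y : Fin d → ℝ) : Fin d → ℝ :=
  fun i => ε * (⌊x i / ε⌋ : ℝ) + ε * y i

def Ycube (d : ℕ) : Set (Fin d → ℝ) := Set.pi Set.univ fun _ => Set.Ico (0:ℝ) 1

lemma measurable_cellOf {ε : ℝ} : Measurable (cellOf (d := d) ε) := by
  apply measurable_pi_lambda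
  intro i
  exact Measurable.comp Int.measurable_floor (by fun_prop : Measurable fun c : Fin d → ℝ => c i / ε)

lemma cell_preimage (ε : ℝ) (hε : 0 < ε) (k : Fin d → ℤ) :
    cellOf ε ⁻¹' {k} = Set.pi Set.univ fun i => Set.Ico (ε * k i) (ε * (k i + 1)) := by
  ext x
  simp only [mem_preimage, mem_singleton_iff, funext_iff, Set.mem_pi, mem_univ, forall_true_left,
    mem_Ico, cellOf]
  refine forall_congr' fun i => ?_
  rw [Int.floor_eq_iff]
  constructor
  · rintro ⟨h1, h2⟩
    constructor
    · calc ε * k i ≤ ε * (x i / ε) := by nlinarith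
        _ = x i := by field_simp
    · calc x i = ε * (x i / ε) := by field_simp
        _ < ε * (k i + 1) := by push_cast; nlinarith
  · rintro ⟨h1, h2⟩
    constructor
    · rw [le_div_iff₀ hε]; linarith [h1]
    · rw [div_lt_iff₀ hε]; push_cast; linarith [h2]

lemma cell_disjoint (ε : ℝ) : Pairwise (Function.onFun Disjoint fun k : Fin d → ℤ => cellOf ε ⁻¹' {k}) := by
  intro k l hkl
  simp only [Function.onFun]
  apply Disjoint.preimage
  simp [disjoint_iff_inter_eq_empty, Set.inter_singleton_eq_empty, hkl]

lemma cell_iUnion (ε : ℝ) : (⋃ k : Fin d → ℤ, cellOf ε ⁻¹' {k}) = Set.univ := by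
  ext x; simp

lemma volume_cell (ε : ℝ) (hε : 0 < ε) (k : Fin d → ℤ) :
    volume (cellOf (d := d) ε ⁻¹' {k}) = ENNReal.ofReal (ε ^ d) := by
  rw [cell_preimage ε hε, volume_pi_pi]
  simp only [Real.volume_Ico]
  have : ∀ i : Fin d, ENNReal.ofReal (ε * (↑(k i) + 1) - ε * ↑(k i)) = ENNReal.ofReal ε := by
    intro i; ring_nf
  rw [Finset.prod_congr rfl fun i _ => this i, Finset.prod_const, ← ENNReal.ofReal_pow hε.le]
  simp

lemma map_affine (ε : ℝ) (hε : 0 < ε) (v : Fin d → ℝ) :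
    Measure.map (fun y : Fin d → ℝ => v + ε • y) volume
      = ENNReal.ofReal ((ε ^ d)⁻¹) • volume := by
  have h1 : (fun y : Fin d → ℝ => v + ε • y) = (fun z => v + z) ∘ (fun y => ε • y) := rfl
  rw [h1, ← Measure.map_map (measurable_const_add v) (measurable_const_smul ε),
    Measure.map_addHaar_smul volume hε.ne', Measure.map_smul,
    map_add_left_eq_self volume v]
  congr 1
  rw [abs_of_nonneg (by positivity)]
  congr 1
  simp [Module.finrank_fin_fun]

lemma cell_integral (ε : ℝ) (hε : 0 < ε) (g : (Fin d → ℝ) → ℝ≥0∞) (hg : Measurable g)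
    (k : Fin d → ℤ) :
    ∫⁻ x in (cellOf ε ⁻¹' {k}), g x
      = ENNReal.ofReal (ε ^ d) * ∫⁻ y in Ycube d, g ((fun i => ε * k i) + ε • y) := by
  set v : Fin d → ℝ := fun i => ε * k i with hv
  set e : (Fin d → ℝ) → (Fin d → ℝ) := fun y => v + ε • y with he
  have hemeas : Measurable e := (measurable_const_smul ε).const_add v
  have hpre : e ⁻¹' (cellOf ε ⁻¹' {k}) = Ycube d := by
    rw [cell_preimage ε hε]
    ext y
    simp only [mem_preimage, Set.mem_pi, mem_univ, forall_true_left, mem_Ico, Ycube, he,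
      Pi.add_apply, Pi.smul_apply, smul_eq_mul, hv]
    refine forall_congr' fun i => ?_
    constructor
    · rintro ⟨h1, h2⟩
      constructor
      · nlinarith
      · nlinarith
    · rintro ⟨h1, h2⟩
      constructor
      · nlinarith
      · nlinarith
  have hms : MeasurableSet (cellOf ε ⁻¹' {k}) := measurable_cellOf (MeasurableSet.singleton k)
  have hmap := map_affine ε hε v
  have h2 : (Measure.map e volume).restrict (cellOf ε ⁻¹' {k})
      = Measure.map e (volume.restrict (Ycube d)) := by
    rw [Measure.restrict_map hemeas hms, hpre]
  rw [hmap] at h2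
  have h3 : ∫⁻ x, g x ∂((ENNReal.ofReal ((ε ^ d)⁻¹) • volume).restrict (cellOf ε ⁻¹' {k}))
      = ∫⁻ y in Ycube d, g (e y) := by
    rw [h2, lintegral_map hg hemeas]
  rw [Measure.restrict_smul, lintegral_smul_measure] at h3
  have hεd : (0:ℝ) < ε ^ d := by positivity
  rw [ENNReal.ofReal_inv_of_pos hεd] at h3
  have hne : ENNReal.ofReal (ε ^ d) ≠ 0 := by
    simp [ENNReal.ofReal_eq_zero, not_le, hεd]
  calc ∫⁻ x in (cellOf ε ⁻¹' {k}), g x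
      = ENNReal.ofReal (ε ^ d) * ((ENNReal.ofReal (ε ^ d))⁻¹ * ∫⁻ x in (cellOf ε ⁻¹' {k}), g x) := by
        rw [← mul_assoc, ENNReal.mul_inv_cancel hne ENNReal.ofReal_ne_top, one_mul]
    _ = ENNReal.ofReal (ε ^ d) * ∫⁻ y in Ycube d, g (e y) := by rw [← h3, smul_eq_mul]

lemma unfold_lintegral (ε : ℝ) (hε : 0 < ε) (g : (Fin d → ℝ) → ℝ≥0∞) (hg : Measurable g) :
    (∫⁻ x, ∫⁻ y in Ycube d, g (unfoldPt ε x y)) = ∫⁻ x, g x := by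
  have hms : ∀ k : Fin d → ℤ, MeasurableSet (cellOf ε ⁻¹' {k}) :=
    fun k => measurable_cellOf (MeasurableSet.singleton k)
  have hsplit : ∀ h : (Fin d → ℝ) → ℝ≥0∞,
      (∫⁻ x, h x) = ∑' k : Fin d → ℤ, ∫⁻ x in (cellOf ε ⁻¹' {k}), h x := by
    intro h
    rw [← setLIntegral_univ, ← cell_iUnion (d := d) ε, lintegral_iUnion hms (cell_disjoint ε)]
  rw [hsplit (fun x => ∫⁻ y in Ycube d, g (unfoldPt ε x y)), hsplit g]
  refine tsum_congr fun k => ?_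
  have hconst : ∫⁻ x in (cellOf ε ⁻¹' {k}), (∫⁻ y in Ycube d, g (unfoldPt ε x y))
      = (∫⁻ y in Ycube d, g ((fun i => ε * k i) + ε • y)) * volume (cellOf ε ⁻¹' {k}) := by
    rw [setLIntegral_congr_fun (hms k) (fun x hx => ?_), setLIntegral_const]
    have hxk : ∀ i, ⌊x i / ε⌋ = k i := fun i => congrFun hx i
    congr 1
    ext y
    congr 1
    ext i
    simp [unfoldPt, hxk i, Pi.add_apply, smul_eq_mul]
  rw [hconst, volume_cell ε hε, cell_integral ε hε g hg, mul_comm]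

lemma measurable_unfold (ε : ℝ) :
    Measurable (fun q : (Fin d → ℝ) × (Fin d → ℝ) => unfoldPt ε q.1 q.2) := by
  apply measurable_pi_lambda
  intro i
  have h1 : Measurable fun q : (Fin d → ℝ) × (Fin d → ℝ) => q.1 i :=
    (measurable_pi_apply i).comp measurable_fst
  have h2 : Measurable fun q : (Fin d → ℝ) × (Fin d → ℝ) => q.2 i :=
    (measurable_pi_apply i).comp measurable_snd
  have h3 : Measurable fun q : (Fin d → ℝ) × (Fin d → ℝ) => ((⌊q.1 i / ε⌋ : ℤ) : ℝ) :=
    (Measurable.of_discrete (f := (Int.cast : ℤ → ℝ))).comp (Int.measurable_floor.comp (h1.div_const ε))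
  exact (measurable_const.mul h3).add (measurable_const.mul h2)

noncomputable def μU (d : ℕ) : Measure ((Fin d → ℝ) × (Fin d → ℝ)) :=
  volume.prod (volume.restrict (Ycube d))

lemma measurableSet_Ycube : MeasurableSet (Ycube d) :=
  MeasurableSet.univ_pi fun _ => measurableSet_Ico

instance : SFinite (volume.restrict (Ycube d)) := by infer_instance

lemma volume_Ycube : volume (Ycube d) = 1 := by
  rw [Ycube, volume_pi_pi]
  simp [Real.volume_Ico]

/-- unfolding a null set gives a null set in the product -/
lemma unfold_null (ε : ℝ) (hε : 0 < ε) {N : Set (Fin d → ℝ)} (hN : MeasurableSet N)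
    (h0 : volume N = 0) :
    μU d {q : (Fin d → ℝ) × (Fin d → ℝ) | unfoldPt ε q.1 q.2 ∈ N} = 0 := by
  have hms : MeasurableSet {q : (Fin d → ℝ) × (Fin d → ℝ) | unfoldPt ε q.1 q.2 ∈ N} :=
    (measurable_unfold ε) hN
  have : μU d {q : (Fin d → ℝ) × (Fin d → ℝ) | unfoldPt ε q.1 q.2 ∈ N}
      = ∫⁻ q, N.indicator (fun _ => (1:ℝ≥0∞)) (unfoldPt ε q.1 q.2) ∂(μU d) := by
    rw [← lintegral_indicator_one hms]
    congr 1
  have hfm : Measurable fun q : (Fin d → ℝ) × (Fin d → ℝ) =>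
      N.indicator (fun _ => (1:ℝ≥0∞)) (unfoldPt ε q.1 q.2) :=
    (measurable_one.indicator hN).comp (measurable_unfold ε)
  rw [this, μU, lintegral_prod _ hfm.aemeasurable]
  erw [unfold_lintegral ε hε _ (measurable_one.indicator hN)]
  rw [lintegral_indicator_one hN, h0]

lemma unfold_ae_eq {β : Type*} (ε : ℝ) (hε : 0 < ε) {f f' : (Fin d → ℝ) → β}
    (h : f =ᵐ[volume] f') :
    (fun q : (Fin d → ℝ) × (Fin d → ℝ) => f (unfoldPt ε q.1 q.2))
      =ᵐ[μU d] (fun q => f' (unfoldPt ε q.1 q.2)) := by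
  have h0' : volume {x | ¬ f x = f' x} = 0 := ae_iff.mp h
  obtain ⟨N, hsub, hN, h0⟩ := exists_measurable_superset_of_null h0'
  have hnull := unfold_null ε hε hN h0
  apply ae_iff.mpr
  refine measure_mono_null ?_ hnull
  intro q hq
  simp only [Set.mem_setOf_eq] at hq ⊢
  exact hsub hq

/-- product-measure version of the unfolding isometry, for a.e.-measurable integrands -/
lemma unfold_lintegral_prod (ε : ℝ) (hε : 0 < ε) {g : (Fin d → ℝ) → ℝ≥0∞}
    (hg : AEMeasurable g volume) :
    ∫⁻ q, g (unfoldPt ε q.1 q.2) ∂(μU d) = ∫⁻ x, g x := by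
  set g' := hg.mk g with hg'
  have hmeq : g =ᵐ[volume] g' := hg.ae_eq_mk
  have h1 : (fun q : (Fin d → ℝ) × (Fin d → ℝ) => g (unfoldPt ε q.1 q.2))
      =ᵐ[μU d] (fun q => g' (unfoldPt ε q.1 q.2)) := unfold_ae_eq ε hε hmeq
  have hm : Measurable fun q : (Fin d → ℝ) × (Fin d → ℝ) => g' (unfoldPt ε q.1 q.2) :=
    hg.measurable_mk.comp (measurable_unfold ε)
  rw [lintegral_congr_ae h1, lintegral_congr_ae hmeq, μU, lintegral_prod _ hm.aemeasurable]
  erw [unfold_lintegral ε hε _ hg.measurable_mk]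

lemma dist_unfold (ε : ℝ) (hε : 0 < ε) (x : Fin d → ℝ) {y : Fin d → ℝ}
    (hy : y ∈ Ycube d) : dist (unfoldPt ε x y) x ≤ ε := by
  rw [dist_pi_le_iff hε.le]
  intro i
  have hyi : 0 ≤ y i ∧ y i < 1 := by
    have := hy i (Set.mem_univ i); exact ⟨this.1, this.2⟩
  rw [Real.dist_eq]
  have hfl : (⌊x i / ε⌋ : ℝ) ≤ x i / ε ∧ x i / ε < ⌊x i / ε⌋ + 1 :=
    ⟨Int.floor_le _, Int.lt_floor_add_one _⟩
  have hxe : x i = ε * (x i / ε) := by field_simp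
  rw [abs_le]
  constructor
  · unfold unfoldPt; nlinarith [hfl.1, hfl.2, hyi.1, hyi.2]
  · unfold unfoldPt; nlinarith [hfl.1, hfl.2, hyi.1, hyi.2]

lemma eLpNorm_eq_lint {α : Type*} [MeasurableSpace α] (μ : Measure α) (p : ℝ) (hp : 1 ≤ p)
    (f : α → ℝ) :
    eLpNorm f (ENNReal.ofReal p) μ = (∫⁻ x, ENNReal.ofReal |f x| ^ p ∂μ) ^ (1/p) := by
  have hp0 : (0:ℝ) < p := lt_of_lt_of_le one_pos hp
  rw [eLpNorm_eq_lintegral_rpow_enorm_toReal (by simp [ENNReal.ofReal_eq_zero, not_le, hp0])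
    ENNReal.ofReal_ne_top]
  rw [ENNReal.toReal_ofReal hp0.le]
  congr 1
  refine lintegral_congr fun x => ?_
  rw [Real.enorm_eq_ofReal_abs]

lemma tri_lint {α : Type*} [MeasurableSpace α] (μ : Measure α) (p : ℝ) (hp : 1 ≤ p)
    {u v w : α → ℝ}
    (hv : AEMeasurable (fun a => ENNReal.ofReal |v a| ^ p) μ)
    (hw : AEMeasurable (fun a => ENNReal.ofReal |w a| ^ p) μ)
    (h : ∀ a, |u a| ≤ |v a| + |w a|) :
    (∫⁻ a, ENNReal.ofReal |u a| ^ p ∂μ) ^ (1/p)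
      ≤ (∫⁻ a, ENNReal.ofReal |v a| ^ p ∂μ) ^ (1/p)
        + (∫⁻ a, ENNReal.ofReal |w a| ^ p ∂μ) ^ (1/p) := by
  have hp0 : (0:ℝ) < p := lt_of_lt_of_le one_pos hp
  have hv' : AEMeasurable (fun a => ENNReal.ofReal |v a|) μ := by
    have := hv.pow_const (1/p)
    refine this.congr (ae_of_all _ fun a => ?_)
    simp only []
    rw [← ENNReal.rpow_mul, mul_one_div, div_self hp0.ne', ENNReal.rpow_one]
  have hw' : AEMeasurable (fun a => ENNReal.ofReal |w a|) μ := by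
    have := hw.pow_const (1/p)
    refine this.congr (ae_of_all _ fun a => ?_)
    simp only []
    rw [← ENNReal.rpow_mul, mul_one_div, div_self hp0.ne', ENNReal.rpow_one]
  calc (∫⁻ a, ENNReal.ofReal |u a| ^ p ∂μ) ^ (1/p)
      ≤ (∫⁻ a, (ENNReal.ofReal |v a| + ENNReal.ofReal |w a|) ^ p ∂μ) ^ (1/p) := by
        refine ENNReal.rpow_le_rpow (lintegral_mono fun a => ?_) (by positivity)
        refine ENNReal.rpow_le_rpow ?_ hp0.le
        rw [← ENNReal.ofReal_add (abs_nonneg _) (abs_nonneg _)]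
        exact ENNReal.ofReal_le_ofReal (h a)
    _ ≤ _ := ENNReal.lintegral_Lp_add_le hv' hw' hp

lemma ae_snd_mem : ∀ᵐ q ∂(μU d), q.2 ∈ Ycube d := by
  apply ae_iff.mpr
  have : {q : (Fin d → ℝ) × (Fin d → ℝ) | ¬ q.2 ∈ Ycube d}
      = (Set.univ : Set (Fin d → ℝ)) ×ˢ (Ycube d)ᶜ := by
    ext q; simp [Set.mem_prod]
  rw [this, μU, Measure.prod_prod, Measure.restrict_apply (measurableSet_Ycube).compl]
  simp

lemma W_tendsto (p : ℝ) (hp : 1 ≤ p) (g : (Fin d → ℝ) → ℝ) (hgc : Continuous g)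
    (hgs : HasCompactSupport g) :
    Tendsto (fun ε => ∫⁻ q, ENNReal.ofReal |g (unfoldPt ε q.1 q.2) - g q.1| ^ p ∂(μU d))
      (𝓝[>] (0:ℝ)) (𝓝 0) := by
  have hp0 : (0:ℝ) < p := one_pos.trans_le hp
  rw [ENNReal.tendsto_nhds_zero]
  intro δ hδ
  obtain ⟨R, hR⟩ := hgs.isBounded.subset_closedBall 0
  set S := Metric.closedBall (0 : Fin d → ℝ) (R+1) with hS
  set C := volume S with hCdef
  have hC : C ≠ ∞ := ((isCompact_closedBall _ _).measure_lt_top).ne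
  have htend : Tendsto (fun t : ℝ => ENNReal.ofReal t ^ p * C) (𝓝[>] (0:ℝ)) (𝓝 0) := by
    have h1 : Tendsto (fun t : ℝ => ENNReal.ofReal t) (𝓝[>] (0:ℝ)) (𝓝 0) := by
      refine Tendsto.mono_left ?_ nhdsWithin_le_nhds
      simpa using ENNReal.continuous_ofReal.tendsto 0
    have h2 : Tendsto (fun x : ℝ≥0∞ => x ^ p * C) (𝓝 0) (𝓝 0) := by
      have h3 : Tendsto (fun x : ℝ≥0∞ => x ^ p) (𝓝 0) (𝓝 0) := by
        have := (ENNReal.continuous_rpow_const (y := p)).tendsto (0 : ℝ≥0∞)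
        simpa [ENNReal.zero_rpow_of_pos hp0] using this
      have := ENNReal.Tendsto.mul_const h3 (Or.inr hC)
      simpa using this
    exact h2.comp h1
  obtain ⟨t, ht, ht0⟩ :=
    (((ENNReal.tendsto_nhds_zero.mp htend) δ hδ).and self_mem_nhdsWithin).exists
  obtain ⟨r, hr, hru⟩ := Metric.uniformContinuous_iff.mp
    (hgs.uniformContinuous_of_continuous hgc) t ht0
  have hmem : Ioo (0:ℝ) (min r 1) ∈ 𝓝[>] (0:ℝ) :=
    Ioo_mem_nhdsGT_of_mem ⟨le_refl 0, by positivity⟩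
  filter_upwards [hmem] with ε hε
  obtain ⟨hε0, hεlt⟩ := hε
  have hSm : MeasurableSet (S ×ˢ (Set.univ : Set (Fin d → ℝ))) :=
    measurableSet_closedBall.prod MeasurableSet.univ
  calc ∫⁻ q, ENNReal.ofReal |g (unfoldPt ε q.1 q.2) - g q.1| ^ p ∂(μU d)
      ≤ ∫⁻ q, (S ×ˢ (Set.univ : Set (Fin d → ℝ))).indicator
          (fun _ => ENNReal.ofReal t ^ p) q ∂(μU d) := by
        refine lintegral_mono_ae ?_
        filter_upwards [ae_snd_mem] with q hq
        have hdist : dist (unfoldPt ε q.1 q.2) q.1 ≤ ε := dist_unfold ε hε0 q.1 hq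
        by_cases hq1 : q.1 ∈ S
        · rw [Set.indicator_of_mem (Set.mem_prod.mpr ⟨hq1, Set.mem_univ _⟩)]
          refine ENNReal.rpow_le_rpow (ENNReal.ofReal_le_ofReal ?_) hp0.le
          have hlt : dist (unfoldPt ε q.1 q.2) q.1 < r :=
            lt_of_le_of_lt hdist (lt_of_lt_of_le hεlt (min_le_left _ _))
          have := hru hlt
          rw [Real.dist_eq] at this
          exact this.le
        · rw [Set.indicator_of_notMem (by simp [Set.mem_prod, hq1])]
          have hq1' : R + 1 < ‖q.1‖ := by
            simp only [hS, Metric.mem_closedBall, dist_zero_right, not_le] at hq1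
            exact hq1
          have hg1 : g q.1 = 0 := by
            apply image_eq_zero_of_notMem_tsupport
            intro hmem'
            have := hR hmem'
            rw [Metric.mem_closedBall, dist_zero_right] at this
            linarith
          have hg2 : g (unfoldPt ε q.1 q.2) = 0 := by
            apply image_eq_zero_of_notMem_tsupport
            intro hmem'
            have h1 := hR hmem'
            rw [Metric.mem_closedBall, dist_zero_right] at h1
            have h2 : ‖q.1‖ - ‖unfoldPt ε q.1 q.2‖ ≤ ε := by
              have h3 := norm_sub_norm_le q.1 (unfoldPt ε q.1 q.2)
              have h4 : ‖q.1 - unfoldPt ε q.1 q.2‖ = dist (unfoldPt ε q.1 q.2) q.1 := by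
                rw [← dist_eq_norm, dist_comm]
              linarith [hdist]
            linarith [hεlt, min_le_right r (1:ℝ)]
          rw [hg1, hg2]
          simp [ENNReal.zero_rpow_of_pos hp0]
    _ = ENNReal.ofReal t ^ p * μU d (S ×ˢ (Set.univ : Set (Fin d → ℝ))) := by
        rw [lintegral_indicator_const hSm]
    _ ≤ δ := by
        rw [μU, Measure.prod_prod, Measure.restrict_apply_univ, volume_Ycube, mul_one]
        exact ht

lemma meas_aux {α : Type*} [MeasurableSpace α] {f : α → ℝ} (hf : Measurable f) (p : ℝ) :
    Measurable fun a => ENNReal.ofReal |f a| ^ p :=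
  ((ENNReal.continuous_rpow_const (y := p)).measurable).comp
    (ENNReal.measurable_ofReal.comp (continuous_abs.measurable.comp hf))

lemma fst_ae_eq {β : Type*} {f f' : (Fin d → ℝ) → β} (h : f =ᵐ[volume] f') :
    (fun q : (Fin d → ℝ) × (Fin d → ℝ) => f q.1) =ᵐ[μU d] fun q => f' q.1 :=
  Measure.quasiMeasurePreserving_fst.ae_eq_comp h

lemma lintegral_fst' {h : (Fin d → ℝ) → ℝ≥0∞} (hm : AEMeasurable h volume) :
    ∫⁻ q, h q.1 ∂(μU d) = ∫⁻ x, h x := by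
  have hm' : AEMeasurable (fun q : (Fin d → ℝ) × (Fin d → ℝ) => h q.1)
      (volume.prod (volume.restrict (Ycube d))) :=
    hm.comp_quasiMeasurePreserving Measure.quasiMeasurePreserving_fst
  rw [μU, lintegral_prod _ hm']
  simp only [setLIntegral_const]
  rw [volume_Ycube]
  simp

lemma V_tendsto_meas (p : ℝ) (hp : 1 ≤ p) (f : (Fin d → ℝ) → ℝ) (hmeas : Measurable f)
    (hf : MemLp f (ENNReal.ofReal p) volume) :
    Tendsto (fun ε => ∫⁻ q, ENNReal.ofReal |f (unfoldPt ε q.1 q.2) - f q.1| ^ p ∂(μU d))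
      (𝓝[>] (0:ℝ)) (𝓝 0) := by
  have hp0 : (0:ℝ) < p := one_pos.trans_le hp
  rw [ENNReal.tendsto_nhds_zero]
  intro δ hδ
  set δ' := min δ 1 with hδ'def
  have hδ'0 : δ' ≠ 0 := (lt_min hδ one_pos).ne'
  have hδ't : δ' ≠ ∞ := (lt_of_le_of_lt (min_le_right _ _) ENNReal.one_lt_top).ne
  set a := δ' ^ (1/p) with hadef
  have ha0 : a ≠ 0 := (ENNReal.rpow_pos (pos_iff_ne_zero.mpr hδ'0) hδ't).ne'
  have hat : a ≠ ∞ := ENNReal.rpow_ne_top_of_nonneg (by positivity) hδ't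
  set η := a / 4 with hηdef
  have hη0 : η ≠ 0 := by
    rw [hηdef]
    simp only [ne_eq, ENNReal.div_eq_zero_iff]
    push_neg
    exact ⟨ha0, by norm_num⟩
  have hηt : η ≠ ∞ := by
    rw [hηdef]
    exact (ENNReal.div_lt_top hat (by norm_num)).ne
  obtain ⟨g, hgsupp, hgap, hgcont, hgmem⟩ :=
    hf.exists_hasCompactSupport_eLpNorm_sub_le (ENNReal.ofReal_ne_top) hη0
  have hgap' : (∫⁻ x, ENNReal.ofReal |f x - g x| ^ p) ^ (1/p) ≤ η := by
    have h1 := hgap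
    rw [eLpNorm_eq_lint volume p hp (f - g)] at h1
    simpa [Pi.sub_apply] using h1
  have hWev : ∀ᶠ ε in 𝓝[>] (0:ℝ),
      (∫⁻ q, ENNReal.ofReal |g (unfoldPt ε q.1 q.2) - g q.1| ^ p ∂(μU d)) ≤ η ^ p :=
    ENNReal.tendsto_nhds_zero.mp (W_tendsto p hp g hgcont hgsupp) (η ^ p)
      (ENNReal.rpow_pos (pos_iff_ne_zero.mpr hη0) hηt)
  filter_upwards [hWev, self_mem_nhdsWithin] with ε hWe hεmem
  have hε0 : (0:ℝ) < ε := hεmem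
  have hT := measurable_unfold (d := d) ε
  have hfT : Measurable fun q : (Fin d → ℝ) × (Fin d → ℝ) => f (unfoldPt ε q.1 q.2) :=
    hmeas.comp hT
  have hgT : Measurable fun q : (Fin d → ℝ) × (Fin d → ℝ) => g (unfoldPt ε q.1 q.2) :=
    hgcont.measurable.comp hT
  have hf1 : Measurable fun q : (Fin d → ℝ) × (Fin d → ℝ) => f q.1 :=
    hmeas.comp measurable_fst
  have hg1 : Measurable fun q : (Fin d → ℝ) × (Fin d → ℝ) => g q.1 :=
    hgcont.measurable.comp measurable_fst
  -- triangle inequality, twice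
  have key : (∫⁻ q, ENNReal.ofReal |f (unfoldPt ε q.1 q.2) - f q.1| ^ p ∂(μU d)) ^ (1/p)
      ≤ η + (η + η) := by
    have step1 := tri_lint (μU d) p hp
      (u := fun q : (Fin d → ℝ) × (Fin d → ℝ) => f (unfoldPt ε q.1 q.2) - f q.1)
      (v := fun q => f (unfoldPt ε q.1 q.2) - g (unfoldPt ε q.1 q.2))
      (w := fun q => g (unfoldPt ε q.1 q.2) - f q.1)
      (meas_aux (hfT.sub hgT) p).aemeasurable
      (meas_aux (hgT.sub hf1) p).aemeasurable
      (fun q => abs_sub_le _ _ _)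
    have step2 := tri_lint (μU d) p hp
      (u := fun q : (Fin d → ℝ) × (Fin d → ℝ) => g (unfoldPt ε q.1 q.2) - f q.1)
      (v := fun q => g (unfoldPt ε q.1 q.2) - g q.1)
      (w := fun q => g q.1 - f q.1)
      (meas_aux (hgT.sub hg1) p).aemeasurable
      (meas_aux (hg1.sub hf1) p).aemeasurable
      (fun q => abs_sub_le _ _ _)
    -- bound the three pieces
    have hb1 : (∫⁻ q, ENNReal.ofReal |f (unfoldPt ε q.1 q.2) - g (unfoldPt ε q.1 q.2)| ^ p
        ∂(μU d)) ^ (1/p) ≤ η := by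
      have heq := unfold_lintegral_prod ε hε0
        (g := fun x => ENNReal.ofReal |f x - g x| ^ p) (meas_aux (hmeas.sub hgcont.measurable) p).aemeasurable
      calc (∫⁻ q, ENNReal.ofReal |f (unfoldPt ε q.1 q.2) - g (unfoldPt ε q.1 q.2)| ^ p
          ∂(μU d)) ^ (1/p)
          = (∫⁻ x, ENNReal.ofReal |f x - g x| ^ p) ^ (1/p) := by rw [heq]
        _ ≤ η := hgap'
    have hb2 : (∫⁻ q, ENNReal.ofReal |g (unfoldPt ε q.1 q.2) - g q.1| ^ p ∂(μU d)) ^ (1/p)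
        ≤ η := by
      calc (∫⁻ q, ENNReal.ofReal |g (unfoldPt ε q.1 q.2) - g q.1| ^ p ∂(μU d)) ^ (1/p)
          ≤ (η ^ p) ^ (1/p) := ENNReal.rpow_le_rpow hWe (by positivity)
        _ = η := by
            rw [← ENNReal.rpow_mul, mul_one_div, div_self hp0.ne', ENNReal.rpow_one]
    have hb3 : (∫⁻ q, ENNReal.ofReal |g q.1 - f q.1| ^ p ∂(μU d)) ^ (1/p) ≤ η := by
      have heq : (∫⁻ q, ENNReal.ofReal |g q.1 - f q.1| ^ p ∂(μU d))
          = ∫⁻ x, ENNReal.ofReal |g x - f x| ^ p :=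
        lintegral_fst' (meas_aux (hgcont.measurable.sub hmeas) p).aemeasurable
      rw [heq]
      have : ∀ x, |g x - f x| = |f x - g x| := fun x => abs_sub_comm _ _
      calc (∫⁻ x, ENNReal.ofReal |g x - f x| ^ p) ^ (1/p)
          = (∫⁻ x, ENNReal.ofReal |f x - g x| ^ p) ^ (1/p) := by
            congr 1; exact lintegral_congr fun x => by rw [this x]
        _ ≤ η := hgap'
    calc (∫⁻ q, ENNReal.ofReal |f (unfoldPt ε q.1 q.2) - f q.1| ^ p ∂(μU d)) ^ (1/p)
        ≤ _ + _ := step1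
      _ ≤ η + (η + η) := add_le_add hb1 (le_trans step2 (add_le_add hb2 hb3))
  -- conclude
  have h3η : η + (η + η) ≤ a := by
    have h4 : (4:ℝ≥0∞) * η = a := by
      rw [hηdef]
      exact ENNReal.mul_div_cancel' (by norm_num) (by norm_num)
    calc η + (η + η) ≤ η + (η + (η + η)) := by
          exact add_le_add le_rfl (add_le_add le_rfl le_add_self)
      _ = 4 * η := by ring
      _ = a := h4
  have hVa : (∫⁻ q, ENNReal.ofReal |f (unfoldPt ε q.1 q.2) - f q.1| ^ p ∂(μU d)) ^ (1/p) ≤ a :=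
    le_trans key h3η
  calc (∫⁻ q, ENNReal.ofReal |f (unfoldPt ε q.1 q.2) - f q.1| ^ p ∂(μU d))
      = ((∫⁻ q, ENNReal.ofReal |f (unfoldPt ε q.1 q.2) - f q.1| ^ p ∂(μU d)) ^ (1/p)) ^ p := by
        rw [← ENNReal.rpow_mul, one_div_mul_cancel hp0.ne', ENNReal.rpow_one]
    _ ≤ a ^ p := ENNReal.rpow_le_rpow hVa hp0.le
    _ = δ' := by
        rw [hadef, ← ENNReal.rpow_mul, one_div_mul_cancel hp0.ne', ENNReal.rpow_one]
    _ ≤ δ := min_le_left _ _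

lemma aemeas_aux {α : Type*} [MeasurableSpace α] {μ : Measure α} {f : α → ℝ}
    (hf : AEMeasurable f μ) (p : ℝ) :
    AEMeasurable (fun a => ENNReal.ofReal |f a| ^ p) μ :=
  (((ENNReal.continuous_rpow_const (y := p)).measurable).comp
    (ENNReal.measurable_ofReal.comp continuous_abs.measurable)).comp_aemeasurable hf

lemma qmp_unfold (ε : ℝ) (hε : 0 < ε) :
    Measure.QuasiMeasurePreserving
      (fun q : (Fin d → ℝ) × (Fin d → ℝ) => unfoldPt ε q.1 q.2) (μU d) volume := by
  refine ⟨measurable_unfold ε, ?_⟩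
  refine Measure.AbsolutelyContinuous.mk fun s hs h0 => ?_
  rw [Measure.map_apply (measurable_unfold ε) hs]
  exact unfold_null ε hε hs h0

lemma qmp_affine (ε : ℝ) (hε : 0 < ε) (v : Fin d → ℝ) :
    Measure.QuasiMeasurePreserving (fun y : Fin d → ℝ => v + ε • y)
      (volume.restrict (Ycube d)) volume := by
  refine ⟨(measurable_const_smul ε).const_add v, ?_⟩
  have h1 : Measure.map (fun y : Fin d → ℝ => v + ε • y) (volume.restrict (Ycube d))
      ≤ Measure.map (fun y : Fin d → ℝ => v + ε • y) volume :=
    Measure.map_mono Measure.restrict_le_self ((measurable_const_smul ε).const_add v)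
  rw [map_affine ε hε v] at h1
  exact (Measure.absolutelyContinuous_of_le h1).trans Measure.smul_absolutelyContinuous

lemma V_tendsto (p : ℝ) (hp : 1 ≤ p) (f : (Fin d → ℝ) → ℝ)
    (hf : MemLp f (ENNReal.ofReal p) volume) :
    Tendsto (fun ε => ∫⁻ q, ENNReal.ofReal |f (unfoldPt ε q.1 q.2) - f q.1| ^ p ∂(μU d))
      (𝓝[>] (0:ℝ)) (𝓝 0) := by
  have ham : AEMeasurable f volume := hf.aestronglyMeasurable.aemeasurable
  set f₀ := ham.mk f with hf₀def
  have hfeq : f =ᵐ[volume] f₀ := ham.ae_eq_mk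
  have hmeas : Measurable f₀ := ham.measurable_mk
  have hf₀ : MemLp f₀ (ENNReal.ofReal p) volume := hf.ae_eq hfeq
  refine (V_tendsto_meas p hp f₀ hmeas hf₀).congr' ?_
  filter_upwards [self_mem_nhdsWithin] with ε hε
  refine lintegral_congr_ae ?_
  filter_upwards [unfold_ae_eq ε hε hfeq, fst_ae_eq (d := d) hfeq] with q h1 h2
  rw [h1, h2]

lemma main_lint_tendsto (p : ℝ) (hp : 1 ≤ p) (ψ : (Fin d → ℝ) → ℝ) (Ψ : ℝ → (Fin d → ℝ) → ℝ)
    (hψ : MemLp ψ (ENNReal.ofReal p) volume)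
    (hΨ : ∀ ε : ℝ, 0 < ε → MemLp (Ψ ε) (ENNReal.ofReal p) volume)
    (hconv : Tendsto (fun ε : ℝ => ∫ x, |Ψ ε x - ψ x| ^ p) (𝓝[>] (0 : ℝ)) (𝓝 0)) :
    Tendsto (fun ε : ℝ =>
        ∫⁻ q, ENNReal.ofReal |Ψ ε (unfoldPt ε q.1 q.2) - ψ q.1| ^ p ∂(μU d))
      (𝓝[>] (0:ℝ)) (𝓝 0) := by
  have hp0 : (0:ℝ) < p := one_pos.trans_le hp
  have hψae : AEMeasurable ψ volume := hψ.aestronglyMeasurable.aemeasurable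
  have hint : ∀ ε : ℝ, 0 < ε → Integrable (fun x => |Ψ ε x - ψ x| ^ p) volume := by
    intro ε hε
    have := ((hΨ ε hε).sub hψ).integrable_norm_rpow
      (by simp [ENNReal.ofReal_eq_zero, not_le, hp0]) ENNReal.ofReal_ne_top
    simpa [ENNReal.toReal_ofReal hp0.le, Real.norm_eq_abs, Pi.sub_apply] using this
  have hN1 : Tendsto (fun ε : ℝ => ∫⁻ x, ENNReal.ofReal |Ψ ε x - ψ x| ^ p) (𝓝[>] (0:ℝ))
      (𝓝 0) := by
    have h1 : Tendsto (fun ε : ℝ => ENNReal.ofReal (∫ x, |Ψ ε x - ψ x| ^ p)) (𝓝[>] (0:ℝ))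
        (𝓝 0) := by
      have := (ENNReal.continuous_ofReal.tendsto 0).comp hconv
      simpa [Function.comp_def] using this
    refine Tendsto.congr' ?_ h1
    filter_upwards [self_mem_nhdsWithin] with ε hε
    rw [ofReal_integral_eq_lintegral_ofReal (hint ε hε) (ae_of_all _ fun x => by positivity)]
    refine lintegral_congr fun x => ?_
    rw [ENNReal.ofReal_rpow_of_nonneg (abs_nonneg _) hp0.le]
  have hV := V_tendsto p hp ψ hψ
  rw [ENNReal.tendsto_nhds_zero]
  intro δ hδ
  set δ' := min δ 1 with hδ'def
  have hδ'0 : δ' ≠ 0 := (lt_min hδ one_pos).ne'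
  have hδ't : δ' ≠ ∞ := (lt_of_le_of_lt (min_le_right _ _) ENNReal.one_lt_top).ne
  set a := δ' ^ (1/p) with hadef
  have ha0 : a ≠ 0 := (ENNReal.rpow_pos (pos_iff_ne_zero.mpr hδ'0) hδ't).ne'
  have hat : a ≠ ∞ := ENNReal.rpow_ne_top_of_nonneg (by positivity) hδ't
  set η := a / 2 with hηdef
  have hη0 : η ≠ 0 := by
    rw [hηdef]
    simp only [ne_eq, ENNReal.div_eq_zero_iff]
    push_neg
    exact ⟨ha0, by norm_num⟩
  have hηt : η ≠ ∞ := by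
    rw [hηdef]
    exact (ENNReal.div_lt_top hat (by norm_num)).ne
  have hηp : (0:ℝ≥0∞) < η ^ p := ENNReal.rpow_pos (pos_iff_ne_zero.mpr hη0) hηt
  filter_upwards [ENNReal.tendsto_nhds_zero.mp hN1 (η ^ p) hηp,
    ENNReal.tendsto_nhds_zero.mp hV (η ^ p) hηp, self_mem_nhdsWithin] with ε h1 h2 hεmem
  have hε0 : (0:ℝ) < ε := hεmem
  have hΨψae : AEMeasurable (fun x => Ψ ε x - ψ x) volume :=
    (hΨ ε hε0).aestronglyMeasurable.aemeasurable.sub hψae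
  have hv : AEMeasurable
      (fun q : (Fin d → ℝ) × (Fin d → ℝ) =>
        ENNReal.ofReal |Ψ ε (unfoldPt ε q.1 q.2) - ψ (unfoldPt ε q.1 q.2)| ^ p) (μU d) :=
    aemeas_aux (hΨψae.comp_quasiMeasurePreserving (qmp_unfold ε hε0)) p
  have hw : AEMeasurable
      (fun q : (Fin d → ℝ) × (Fin d → ℝ) =>
        ENNReal.ofReal |ψ (unfoldPt ε q.1 q.2) - ψ q.1| ^ p) (μU d) :=
    aemeas_aux ((hψae.comp_quasiMeasurePreserving (qmp_unfold ε hε0)).sub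
      (hψae.comp_quasiMeasurePreserving Measure.quasiMeasurePreserving_fst)) p
  have step := tri_lint (μU d) p hp
    (u := fun q : (Fin d → ℝ) × (Fin d → ℝ) => Ψ ε (unfoldPt ε q.1 q.2) - ψ q.1)
    (v := fun q => Ψ ε (unfoldPt ε q.1 q.2) - ψ (unfoldPt ε q.1 q.2))
    (w := fun q => ψ (unfoldPt ε q.1 q.2) - ψ q.1)
    hv hw (fun q => abs_sub_le _ _ _)
  have hveq : (∫⁻ q, ENNReal.ofReal
        |Ψ ε (unfoldPt ε q.1 q.2) - ψ (unfoldPt ε q.1 q.2)| ^ p ∂(μU d))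
      = ∫⁻ x, ENNReal.ofReal |Ψ ε x - ψ x| ^ p := by
    have := unfold_lintegral_prod ε hε0
      (g := fun x => ENNReal.ofReal |Ψ ε x - ψ x| ^ p) (aemeas_aux hΨψae p)
    exact this
  have hrinv : ∀ b : ℝ≥0∞, (b ^ p) ^ (1/p) = b := fun b => by
    rw [← ENNReal.rpow_mul, mul_one_div, div_self hp0.ne', ENNReal.rpow_one]
  have hb1 : (∫⁻ q, ENNReal.ofReal
        |Ψ ε (unfoldPt ε q.1 q.2) - ψ (unfoldPt ε q.1 q.2)| ^ p ∂(μU d)) ^ (1/p) ≤ η := by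
    rw [hveq]
    calc (∫⁻ x, ENNReal.ofReal |Ψ ε x - ψ x| ^ p) ^ (1/p)
        ≤ (η ^ p) ^ (1/p) := ENNReal.rpow_le_rpow h1 (by positivity)
      _ = η := hrinv η
  have hb2 : (∫⁻ q, ENNReal.ofReal |ψ (unfoldPt ε q.1 q.2) - ψ q.1| ^ p ∂(μU d)) ^ (1/p)
      ≤ η := by
    calc (∫⁻ q, ENNReal.ofReal |ψ (unfoldPt ε q.1 q.2) - ψ q.1| ^ p ∂(μU d)) ^ (1/p)
        ≤ (η ^ p) ^ (1/p) := ENNReal.rpow_le_rpow h2 (by positivity)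
      _ = η := hrinv η
  have key : (∫⁻ q, ENNReal.ofReal |Ψ ε (unfoldPt ε q.1 q.2) - ψ q.1| ^ p ∂(μU d)) ^ (1/p)
      ≤ a := by
    calc (∫⁻ q, ENNReal.ofReal |Ψ ε (unfoldPt ε q.1 q.2) - ψ q.1| ^ p ∂(μU d)) ^ (1/p)
        ≤ _ + _ := step
      _ ≤ η + η := add_le_add hb1 hb2
      _ = 2 * η := by ring
      _ = a := by rw [hηdef]; exact ENNReal.mul_div_cancel' (by norm_num) (by norm_num)
  calc (∫⁻ q, ENNReal.ofReal |Ψ ε (unfoldPt ε q.1 q.2) - ψ q.1| ^ p ∂(μU d))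
      = ((∫⁻ q, ENNReal.ofReal |Ψ ε (unfoldPt ε q.1 q.2) - ψ q.1| ^ p ∂(μU d)) ^ (1/p)) ^ p := by
        rw [← ENNReal.rpow_mul, one_div_mul_cancel hp0.ne', ENNReal.rpow_one]
    _ ≤ a ^ p := ENNReal.rpow_le_rpow key hp0.le
    _ = δ' := by
        rw [hadef, ← ENNReal.rpow_mul, one_div_mul_cancel hp0.ne', ENNReal.rpow_one]
    _ ≤ δ := min_le_left _ _

lemma lint_abs_pow_ne_top (p : ℝ) (hp : 1 ≤ p) {f : (Fin d → ℝ) → ℝ}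
    (hf : MemLp f (ENNReal.ofReal p) volume) :
    (∫⁻ x, ENNReal.ofReal |f x| ^ p) ≠ ∞ := by
  have hp0 : (0:ℝ) < p := one_pos.trans_le hp
  have h := hf.2
  rw [eLpNorm_eq_lint volume p hp f] at h
  have h2 : ((∫⁻ x, ENNReal.ofReal |f x| ^ p) ^ (1/p)) ^ p ≠ ∞ :=
    ENNReal.rpow_ne_top_of_nonneg hp0.le h.ne
  rwa [← ENNReal.rpow_mul, one_div_mul_cancel hp0.ne', ENNReal.rpow_one] at h2

lemma main_lint_finite (p : ℝ) (hp : 1 ≤ p) {ψ A : (Fin d → ℝ) → ℝ}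
    (hψ : MemLp ψ (ENNReal.ofReal p) volume) (hA : MemLp A (ENNReal.ofReal p) volume)
    (ε : ℝ) (hε : 0 < ε) :
    (∫⁻ q, ENNReal.ofReal |A (unfoldPt ε q.1 q.2) - ψ q.1| ^ p ∂(μU d)) ≠ ∞ := by
  have hp0 : (0:ℝ) < p := one_pos.trans_le hp
  have hAae : AEMeasurable A volume := hA.aestronglyMeasurable.aemeasurable
  have hψae : AEMeasurable ψ volume := hψ.aestronglyMeasurable.aemeasurable
  have hv : AEMeasurable (fun q : (Fin d → ℝ) × (Fin d → ℝ) =>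
      ENNReal.ofReal |A (unfoldPt ε q.1 q.2)| ^ p) (μU d) :=
    aemeas_aux (hAae.comp_quasiMeasurePreserving (qmp_unfold ε hε)) p
  have hw : AEMeasurable (fun q : (Fin d → ℝ) × (Fin d → ℝ) =>
      ENNReal.ofReal |ψ q.1| ^ p) (μU d) :=
    aemeas_aux (hψae.comp_quasiMeasurePreserving Measure.quasiMeasurePreserving_fst) p
  have step := tri_lint (μU d) p hp
    (u := fun q : (Fin d → ℝ) × (Fin d → ℝ) => A (unfoldPt ε q.1 q.2) - ψ q.1)
    (v := fun q => A (unfoldPt ε q.1 q.2))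
    (w := fun q => ψ q.1)
    hv hw (fun q => abs_sub _ _)
  have hveq : (∫⁻ q, ENNReal.ofReal |A (unfoldPt ε q.1 q.2)| ^ p ∂(μU d))
      = ∫⁻ x, ENNReal.ofReal |A x| ^ p :=
    unfold_lintegral_prod ε hε (g := fun x => ENNReal.ofReal |A x| ^ p) (aemeas_aux hAae p)
  have hweq : (∫⁻ q, ENNReal.ofReal |ψ q.1| ^ p ∂(μU d)) = ∫⁻ x, ENNReal.ofReal |ψ x| ^ p :=
    lintegral_fst' (aemeas_aux hψae p)
  rw [hveq, hweq] at step
  have hfin : (∫⁻ q, ENNReal.ofReal |A (unfoldPt ε q.1 q.2) - ψ q.1| ^ p ∂(μU d)) ^ (1/p)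
      ≠ ∞ := by
    refine ne_top_of_le_ne_top ?_ step
    exact (ENNReal.add_ne_top.mpr
      ⟨ENNReal.rpow_ne_top_of_nonneg (by positivity) (lint_abs_pow_ne_top p hp hA),
        ENNReal.rpow_ne_top_of_nonneg (by positivity) (lint_abs_pow_ne_top p hp hψ)⟩)
  have h2 := ENNReal.rpow_ne_top_of_nonneg hp0.le hfin (y := p)
  rwa [← ENNReal.rpow_mul, one_div_mul_cancel hp0.ne', ENNReal.rpow_one] at h2

lemma conversion (p : ℝ) (hp : 1 ≤ p) {A ψ : (Fin d → ℝ) → ℝ}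
    (hA : AEMeasurable A volume) (hψae : AEMeasurable ψ volume)
    (ε : ℝ) (hε : 0 < ε)
    (hfin : (∫⁻ q, ENNReal.ofReal |A (unfoldPt ε q.1 q.2) - ψ q.1| ^ p ∂(μU d)) ≠ ∞) :
    ∫ x, ∫ y in Ycube d, |A (unfoldPt ε x y) - ψ x| ^ p
      = (∫⁻ q, ENNReal.ofReal |A (unfoldPt ε q.1 q.2) - ψ q.1| ^ p ∂(μU d)).toReal := by
  have hp0 : (0:ℝ) < p := one_pos.trans_le hp
  set A' := hA.mk A with hA'def
  set ψ' := hψae.mk ψ with hψ'def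
  have hAeq : A =ᵐ[volume] A' := hA.ae_eq_mk
  have hψeq : ψ =ᵐ[volume] ψ' := hψae.ae_eq_mk
  have hA'm : Measurable A' := hA.measurable_mk
  have hψ'm : Measurable ψ' := hψae.measurable_mk
  set Fprod : (Fin d → ℝ) × (Fin d → ℝ) → ℝ≥0∞ :=
    fun q => ENNReal.ofReal |A (unfoldPt ε q.1 q.2) - ψ q.1| ^ p with hFproddef
  set F'prod : (Fin d → ℝ) × (Fin d → ℝ) → ℝ≥0∞ :=
    fun q => ENNReal.ofReal |A' (unfoldPt ε q.1 q.2) - ψ' q.1| ^ p with hF'proddef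
  have hF' : Measurable F'prod :=
    meas_aux ((hA'm.comp (measurable_unfold ε)).sub (hψ'm.comp measurable_fst)) p
  have haeq_prod : Fprod =ᵐ[μU d] F'prod := by
    filter_upwards [unfold_ae_eq ε hε hAeq, fst_ae_eq (d := d) hψeq] with q h1 h2
    rw [hFproddef, hF'proddef]
    simp only
    rw [h1, h2]
  have hFae : AEMeasurable Fprod (μU d) := hF'.aemeasurable.congr haeq_prod.symm
  set l : (Fin d → ℝ) → ℝ≥0∞ :=
    fun x => ∫⁻ y in Ycube d, ENNReal.ofReal |A (unfoldPt ε x y) - ψ x| ^ p with hldef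
  set l' : (Fin d → ℝ) → ℝ≥0∞ :=
    fun x => ∫⁻ y in Ycube d, ENNReal.ofReal |A' (unfoldPt ε x y) - ψ' x| ^ p with hl'def
  have hTon : (∫⁻ q, Fprod q ∂(μU d)) = ∫⁻ x, l x := by
    rw [μU, lintegral_prod _ hFae]
  have hl'meas : Measurable l' := hF'.lintegral_prod_right'
  have hll' : l =ᵐ[volume] l' := by
    filter_upwards [Measure.ae_ae_of_ae_prod haeq_prod] with x hx
    exact lintegral_congr_ae hx
  have hlae : AEMeasurable l volume := hl'meas.aemeasurable.congr hll'.symm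
  have hlint : ∫⁻ x, l x ∂volume = ∫⁻ q, Fprod q ∂(μU d) := hTon.symm
  have hlfin : ∀ᵐ x ∂(volume : Measure (Fin d → ℝ)), l x < ∞ := by
    refine ae_lt_top' hlae ?_
    rw [hlint]
    exact hfin
  -- pointwise inner conversion
  have hinner : ∀ x, ∫ y in Ycube d, |A (unfoldPt ε x y) - ψ x| ^ p = (l x).toReal := by
    intro x
    have hAy : AEMeasurable (fun y => A (unfoldPt ε x y)) (volume.restrict (Ycube d)) :=
      hA.comp_quasiMeasurePreserving (qmp_affine ε hε (fun i => ε * ⌊x i / ε⌋))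
    have hbase : AEMeasurable (fun y => A (unfoldPt ε x y) - ψ x)
        (volume.restrict (Ycube d)) := hAy.sub aemeasurable_const
    have hsm : AEStronglyMeasurable (fun y => |A (unfoldPt ε x y) - ψ x| ^ p)
        (volume.restrict (Ycube d)) := by
      refine AEMeasurable.aestronglyMeasurable ?_
      exact ((Real.continuous_rpow_const hp0.le).measurable.comp
        continuous_abs.measurable).comp_aemeasurable hbase
    rw [integral_eq_lintegral_of_nonneg_ae (ae_of_all _ fun y => by positivity) hsm]
    congr 1
    refine lintegral_congr fun y => ?_
    rw [ENNReal.ofReal_rpow_of_nonneg (abs_nonneg _) hp0.le]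
  calc ∫ x, ∫ y in Ycube d, |A (unfoldPt ε x y) - ψ x| ^ p
      = ∫ x, (l x).toReal := by
        refine integral_congr_ae (ae_of_all _ fun x => ?_)
        exact hinner x
    _ = (∫⁻ x, ENNReal.ofReal ((l x).toReal)).toReal := by
        rw [integral_eq_lintegral_of_nonneg_ae (ae_of_all _ fun x => ENNReal.toReal_nonneg)
          (ENNReal.measurable_toReal.comp_aemeasurable hlae).aestronglyMeasurable]
    _ = (∫⁻ x, l x).toReal := by
        congr 1
        refine lintegral_congr_ae ?_
        filter_upwards [hlfin] with x hx
        exact ENNReal.ofReal_toReal hx.ne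
    _ = (∫⁻ q, Fprod q ∂(μU d)).toReal := by rw [hlint]

/-- Strong `L^p` convergence of unfolded sequences on the whole space:
if `ψ^ε → ψ` in `L^p(ℝ^d)` as `ε → 0⁺`, then the unfolding of `ψ^ε`
converges to `ψ` strongly in `L^p(ℝ^d × [0,1)^d)`. -/
theorem unfolding_strong_Lp_convergence
    (d : ℕ) (hd : 1 ≤ d) (p : ℝ) (hp : 1 ≤ p)
    (ψ : (Fin d → ℝ) → ℝ) (Ψ : ℝ → (Fin d → ℝ) → ℝ)
    (hψ : MemLp ψ (ENNReal.ofReal p) volume)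
    (hΨ : ∀ ε : ℝ, 0 < ε → MemLp (Ψ ε) (ENNReal.ofReal p) volume)
    (hconv : Tendsto (fun ε : ℝ => ∫ x, |Ψ ε x - ψ x| ^ p)
      (𝓝[>] (0 : ℝ)) (𝓝 0)) :
    Tendsto
      (fun ε : ℝ => ∫ x, ∫ y in Set.pi Set.univ fun _ => Set.Ico (0 : ℝ) 1,
        |Ψ ε (fun i => ε * (⌊x i / ε⌋ : ℝ) + ε * y i) - ψ x| ^ p)
      (𝓝[>] (0 : ℝ)) (𝓝 0) := by
  have hmain := main_lint_tendsto (d := d) p hp ψ Ψ hψ hΨ hconv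
  have htoReal : Tendsto
      (fun ε : ℝ => (∫⁻ q, ENNReal.ofReal
        |Ψ ε (unfoldPt ε q.1 q.2) - ψ q.1| ^ p ∂(μU d)).toReal) (𝓝[>] (0:ℝ)) (𝓝 0) := by
    have := (ENNReal.tendsto_toReal (a := 0) (by simp)).comp hmain
    simpa [Function.comp_def] using this
  refine Tendsto.congr' ?_ htoReal
  filter_upwards [self_mem_nhdsWithin] with ε hε
  have hε0 : (0:ℝ) < ε := hε
  exact (conversion p hp (hΨ ε hε0).aestronglyMeasurable.aemeasurable
    hψ.aestronglyMeasurable.aemeasurable ε hε0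
    (main_lint_finite p hp hψ (hΨ ε hε0) ε hε0)).symm
end

section
/- Two-scale compactness on oscillating surfaces: Let d ≥ 2, let Γ ⊆ (0,1)^d be a compact set with 0 < H^{d−1}(Γ) < ∞, let Ω ⊆ ℝ^d be a bounded open set, and let (ε_n) be a sequence of positive reals tending to 0. For each n set Γ^{ε_n} = ⋃_{ξ∈Ξ^{ε_n}}(ε_n ξ + ε_n Γ), where Ξ^{ε_n} = {ξ ∈ ℤ^d : ε_n ξ + ε_n[0,1]^d ⊆ Ω}. Let (v_n) be Borel functions on ℝ^d with sup_n ε_n ∫_{Γ^{ε_n}} v_n(x)² dH^{d−1}(x) < ∞. Then there exist a subsequence (v_{n_k}) and a function v ∈ L²(Ω × Γ) (with respect to the product of Lebesgue measure on Ω and H^{d−1} restricted to Γ) such that for every admissible test function φ one has ε_{n_k} ∫_{Γ^{ε_{n_k}}} v_{n_k}(x) φ(x, x/ε_{n_k}) dH^{d−1}(x) → ∫_Ω ∫_Γ v(x,y) φ(x,y) dH^{d−1}(y) dx as k → ∞. -/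
open MeasureTheory Set Filter Topology

/-- An admissible test function for two-scale convergence on
`Ω ⊆ ℝ^d` (Euclidean): continuous, compactly supported in `Ω` in the first
variable, and `ℤ^d`-periodic in the second variable. -/
def IsAdmissibleTestE (d : ℕ) (Ω : Set (EuclideanSpace ℝ (Fin d)))
    (φ : EuclideanSpace ℝ (Fin d) → EuclideanSpace ℝ (Fin d) → ℝ) : Prop :=
  Continuous (fun p : EuclideanSpace ℝ (Fin d) × EuclideanSpace ℝ (Fin d) => φ p.1 p.2) ∧
  (∃ K : Set (EuclideanSpace ℝ (Fin d)), IsCompact K ∧ K ⊆ Ω ∧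
    ∀ x, x ∉ K → ∀ y, φ x y = 0) ∧
  (∀ x y, ∀ ξ : Fin d → ℤ,
    φ x (WithLp.toLp 2 (fun i => y i + (ξ i : ℝ)) : EuclideanSpace ℝ (Fin d)) = φ x y)

/-- The map `y ↦ εξ + εy` on Euclidean space. -/
noncomputable def cellMapE (d : ℕ) (ε : ℝ) (ξ : Fin d → ℤ) :
    EuclideanSpace ℝ (Fin d) → EuclideanSpace ℝ (Fin d) :=
  fun y => WithLp.toLp 2 (fun i => ε * (ξ i : ℝ) + ε * y i)

/-- The union of the membranes of all the cells contained in `Ω`. -/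
noncomputable def membranes (d : ℕ) (ε : ℝ) (Ω Γ : Set (EuclideanSpace ℝ (Fin d))) :
    Set (EuclideanSpace ℝ (Fin d)) :=
  ⋃ ξ ∈ {ξ : Fin d → ℤ |
      cellMapE d ε ξ '' {y : EuclideanSpace ℝ (Fin d) | ∀ i, y i ∈ Set.Icc (0 : ℝ) 1} ⊆ Ω},
    cellMapE d ε ξ '' Γ

section Helpers

open Pointwise

local notation "⟪" x ", " y "⟫" => @inner ℝ _ _ x y

/-- Weak sequential compactness of bounded sequences in a separable real Hilbert space. -/
theorem weak_seq_compact' {H : Type*} [NormedAddCommGroup H] [InnerProductSpace ℝ H]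
    [CompleteSpace H] [TopologicalSpace.SeparableSpace H]
    (u : ℕ → H) (R : ℝ) (hR : ∀ n, ‖u n‖ ≤ R) :
    ∃ σ : ℕ → ℕ, StrictMono σ ∧ ∃ w : H,
      ∀ ψ : H, Tendsto (fun k => ⟪u (σ k), ψ⟫) atTop (𝓝 ⟪w, ψ⟫) := by
  have hR0 : 0 ≤ R := (norm_nonneg _).trans (hR 0)
  haveI : Nonempty H := ⟨0⟩
  set g : ℕ → H := TopologicalSpace.denseSeq H with hg
  have hgd : DenseRange g := TopologicalSpace.denseRange_denseSeq H
  set S : Set (ℕ → ℝ) := Set.pi Set.univ (fun i => Set.Icc (-(R * ‖g i‖)) (R * ‖g i‖)) with hS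
  have hScomp : IsCompact S := isCompact_univ_pi fun i => isCompact_Icc
  have hSseq : IsSeqCompact S := hScomp.isSeqCompact
  have hmem : ∀ n, (fun i => ⟪u n, g i⟫) ∈ S := by
    intro n i _
    have h1 : |⟪u n, g i⟫| ≤ ‖u n‖ * ‖g i‖ := abs_real_inner_le_norm _ _
    have h2 : ‖u n‖ * ‖g i‖ ≤ R * ‖g i‖ :=
      mul_le_mul_of_nonneg_right (hR n) (norm_nonneg _)
    exact abs_le.1 (h1.trans h2)
  obtain ⟨a, -, σ, hσ, hconv⟩ := hSseq hmem
  have hpt : ∀ i, Tendsto (fun k => ⟪u (σ k), g i⟫) atTop (𝓝 (a i)) := by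
    intro i
    have := hconv
    rw [tendsto_pi_nhds] at this
    exact this i
  have hcauchy : ∀ ψ : H, CauchySeq (fun k => ⟪u (σ k), ψ⟫) := by
    intro ψ
    rw [Metric.cauchySeq_iff]
    intro δ hδ
    have hR1 : (0:ℝ) < R + 1 := by linarith
    obtain ⟨i, hi⟩ := hgd.exists_dist_lt ψ (show (0:ℝ) < δ / (4 * (R + 1)) by positivity)
    have hci : CauchySeq (fun k => ⟪u (σ k), g i⟫) := (hpt i).cauchySeq
    rw [Metric.cauchySeq_iff] at hci
    obtain ⟨N, hN⟩ := hci (δ / 2) (by positivity)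
    refine ⟨N, fun m hm n hn => ?_⟩
    have key : ∀ k, |⟪u (σ k), ψ⟫ - ⟪u (σ k), g i⟫| ≤ δ / 4 := by
      intro k
      have h0 : ⟪u (σ k), ψ⟫ - ⟪u (σ k), g i⟫ = ⟪u (σ k), ψ - g i⟫ := (inner_sub_right _ _ _).symm
      rw [h0]
      have h1 : |⟪u (σ k), ψ - g i⟫| ≤ ‖u (σ k)‖ * ‖ψ - g i‖ := abs_real_inner_le_norm _ _
      have h2 : ‖ψ - g i‖ ≤ δ / (4 * (R + 1)) := by
        rw [← dist_eq_norm]; exact hi.le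
      calc |⟪u (σ k), ψ - g i⟫| ≤ ‖u (σ k)‖ * ‖ψ - g i‖ := h1
        _ ≤ (R + 1) * (δ / (4 * (R + 1))) := by
            apply mul_le_mul ((hR _).trans (by linarith)) h2 (norm_nonneg _) (by linarith)
        _ = δ / 4 := by field_simp
    have hmid := hN m hm n hn
    rw [Real.dist_eq] at hmid ⊢
    have htri : |⟪u (σ m), ψ⟫ - ⟪u (σ n), ψ⟫| ≤
        |⟪u (σ m), ψ⟫ - ⟪u (σ m), g i⟫| + |⟪u (σ m), g i⟫ - ⟪u (σ n), g i⟫|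
          + |⟪u (σ n), g i⟫ - ⟪u (σ n), ψ⟫| := by
      linarith [abs_sub_le (⟪u (σ m), ψ⟫) (⟪u (σ m), g i⟫) (⟪u (σ n), ψ⟫),
        abs_sub_le (⟪u (σ m), g i⟫) (⟪u (σ n), g i⟫) (⟪u (σ n), ψ⟫)]
    have habs : |⟪u (σ n), g i⟫ - ⟪u (σ n), ψ⟫| = |⟪u (σ n), ψ⟫ - ⟪u (σ n), g i⟫| :=
      abs_sub_comm _ _
    calc |⟪u (σ m), ψ⟫ - ⟪u (σ n), ψ⟫| ≤ _ := htri
      _ < δ := by rw [habs]; linarith [key m, key n, hmid]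
  have hlim : ∀ ψ : H, ∃ r : ℝ, Tendsto (fun k => ⟪u (σ k), ψ⟫) atTop (𝓝 r) :=
    fun ψ => cauchySeq_tendsto_of_complete (hcauchy ψ)
  choose L hL using hlim
  have hadd : ∀ x y, L (x + y) = L x + L y := by
    intro x y
    refine tendsto_nhds_unique ?_ ((hL x).add (hL y))
    have h0 : (fun k => ⟪u (σ k), x + y⟫) = fun k => ⟪u (σ k), x⟫ + ⟪u (σ k), y⟫ := by
      funext k; exact inner_add_right _ _ _
    rw [← h0]; exact hL _
  have hsmul : ∀ (c : ℝ) x, L (c • x) = c * L x := by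
    intro c x
    refine tendsto_nhds_unique ?_ ((hL x).const_mul c)
    have h0 : (fun k => ⟪u (σ k), c • x⟫) = fun k => c * ⟪u (σ k), x⟫ := by
      funext k; exact real_inner_smul_right _ _ _
    rw [← h0]; exact hL _
  have hbound : ∀ ψ, ‖L ψ‖ ≤ R * ‖ψ‖ := by
    intro ψ
    have h0 : ∀ k, ‖⟪u (σ k), ψ⟫‖ ≤ R * ‖ψ‖ := by
      intro k
      refine (abs_real_inner_le_norm _ _).trans ?_
      exact mul_le_mul_of_nonneg_right (hR _) (norm_nonneg _)
    exact le_of_tendsto ((hL ψ).norm) (Eventually.of_forall h0)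
  let Lmap : H →ₗ[ℝ] ℝ :=
    { toFun := L
      map_add' := hadd
      map_smul' := by intro c x; simpa using hsmul c x }
  let Lc : H →L[ℝ] ℝ := LinearMap.mkContinuous Lmap R hbound
  obtain ⟨w, hw⟩ := (InnerProductSpace.toDual ℝ H).surjective Lc
  refine ⟨σ, hσ, w, fun ψ => ?_⟩
  have h0 : ⟪w, ψ⟫ = L ψ := by
    have := congrArg (fun f : StrongDual ℝ H => f ψ) hw
    exact (by simpa [InnerProductSpace.toDual_apply_apply] using this : ⟪w, ψ⟫ = Lc ψ)
  rw [h0]; exact hL ψ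

section SumIndicator
variable {α ι : Type*} {S : Finset ι} {w : ι → Set α}

lemma sum_indicator_unique
    (huniq : ∀ a : α, ∀ ξ ∈ S, ∀ ξ' ∈ S, a ∈ w ξ → a ∈ w ξ' → ξ = ξ')
    (f : ι → α → ℝ) {a : α} {ξ₀ : ι} (hξ₀ : ξ₀ ∈ S) (ha : a ∈ w ξ₀) :
    (∑ ξ ∈ S, (w ξ).indicator (f ξ) a) = f ξ₀ a := by
  rw [Finset.sum_eq_single ξ₀]
  · exact Set.indicator_of_mem ha _
  · intro ξ hξ hne
    apply Set.indicator_of_notMem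
    intro hmem
    exact hne (huniq a ξ hξ ξ₀ hξ₀ hmem ha)
  · intro h; exact absurd hξ₀ h

lemma sum_indicator_of_not_mem (f : ι → α → ℝ) {a : α} (ha : ∀ ξ ∈ S, a ∉ w ξ) :
    (∑ ξ ∈ S, (w ξ).indicator (f ξ) a) = 0 := by
  apply Finset.sum_eq_zero
  intro ξ hξ
  exact Set.indicator_of_notMem (ha ξ hξ) _

lemma sum_indicator_mul
    (huniq : ∀ a : α, ∀ ξ ∈ S, ∀ ξ' ∈ S, a ∈ w ξ → a ∈ w ξ' → ξ = ξ')
    (f g : ι → α → ℝ) (a : α) :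
    (∑ ξ ∈ S, (w ξ).indicator (f ξ) a) * (∑ ξ ∈ S, (w ξ).indicator (g ξ) a)
      = ∑ ξ ∈ S, (w ξ).indicator (fun b => f ξ b * g ξ b) a := by
  classical
  by_cases h : ∃ ξ ∈ S, a ∈ w ξ
  · obtain ⟨ξ₀, hξ₀, ha⟩ := h
    rw [sum_indicator_unique huniq f hξ₀ ha, sum_indicator_unique huniq g hξ₀ ha,
      sum_indicator_unique huniq _ hξ₀ ha]
  · push_neg at h
    rw [sum_indicator_of_not_mem f h, sum_indicator_of_not_mem g h,
      sum_indicator_of_not_mem _ h, zero_mul]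

end SumIndicator

section Geometry

variable {d : ℕ}
local notation "E" => EuclideanSpace ℝ (Fin d)

lemma abs_coord_le_norm (x : E) (i : Fin d) : |x i| ≤ ‖x‖ := by
  rw [EuclideanSpace.norm_eq]
  have h1 : |x i| = Real.sqrt (‖x i‖ ^ 2) := by
    rw [Real.sqrt_sq_eq_abs]; simp [abs_abs]
  rw [h1]
  apply Real.sqrt_le_sqrt
  exact Finset.single_le_sum (f := fun j => ‖x j‖ ^ 2) (fun j _ => sq_nonneg _)
    (Finset.mem_univ i)

lemma norm_le_of_coord {x : E} {c : ℝ} (hc : 0 ≤ c) (h : ∀ i, |x i| ≤ c) :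
    ‖x‖ ≤ Real.sqrt d * c := by
  rw [EuclideanSpace.norm_eq]
  have hsum : ∑ i : Fin d, ‖x i‖ ^ 2 ≤ ∑ _i : Fin d, c ^ 2 := by
    apply Finset.sum_le_sum
    intro i _
    have := h i
    rw [Real.norm_eq_abs] at *
    nlinarith [abs_nonneg (x i)]
  calc Real.sqrt (∑ i : Fin d, ‖x i‖ ^ 2) ≤ Real.sqrt (∑ _i : Fin d, c ^ 2) :=
        Real.sqrt_le_sqrt hsum
    _ = Real.sqrt (d * c ^ 2) := by simp [Finset.sum_const, mul_comm]
    _ = Real.sqrt d * c := by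
        rw [Real.sqrt_mul (Nat.cast_nonneg d), Real.sqrt_sq hc]

lemma cellMapE_apply (ε : ℝ) (ξ : Fin d → ℤ) (y : E) (i : Fin d) :
    cellMapE d ε ξ y i = ε * (ξ i : ℝ) + ε * y i := rfl

lemma cellMapE_eq_affine (ε : ℝ) (ξ : Fin d → ℤ) (y : E) :
    cellMapE d ε ξ y = (WithLp.toLp 2 (fun i => ε * (ξ i : ℝ)) : E) + ε • y := by
  ext i; simp [cellMapE]

/-- `cellMapE` as a homeomorphism, for `ε ≠ 0`. -/
noncomputable def cellHomeo (ε : ℝ) (hε : ε ≠ 0) (ξ : Fin d → ℤ) : E ≃ₜ E :=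
  (Homeomorph.smulOfNeZero (ε : ℝ) hε).trans
    (Homeomorph.addLeft (WithLp.toLp 2 (fun i => ε * (ξ i : ℝ)) : E))

lemma cellHomeo_coe (ε : ℝ) (hε : ε ≠ 0) (ξ : Fin d → ℤ) :
    ⇑(cellHomeo (d := d) ε hε ξ) = cellMapE d ε ξ := by
  funext y
  simp only [cellHomeo, Homeomorph.trans_apply, Homeomorph.smulOfNeZero, Homeomorph.smul,
    Homeomorph.coe_addLeft]
  rw [cellMapE_eq_affine]
  rfl

lemma cellMapE_measurableEmbedding (ε : ℝ) (hε : ε ≠ 0) (ξ : Fin d → ℤ) :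
    MeasurableEmbedding (cellMapE d ε ξ) := by
  rw [← cellHomeo_coe ε hε ξ]
  exact (cellHomeo ε hε ξ).measurableEmbedding

lemma cellMapE_continuous (ε : ℝ) (ξ : Fin d → ℤ) : Continuous (cellMapE d ε ξ) := by
  refine (PiLp.continuous_toLp 2 _).comp ?_
  apply continuous_pi
  intro i
  exact continuous_const.add (continuous_const.mul (PiLp.continuous_apply 2 _ i))

/-- Hausdorff measure scaling under `cellMapE`. -/
lemma hausdorff_image_cellMapE {s : ℝ} (hs : 0 ≤ s) {ε : ℝ} (hε : 0 < ε) (ξ : Fin d → ℤ)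
    (A : Set E) :
    μH[s] (cellMapE d ε ξ '' A) = ENNReal.ofReal (ε ^ s) * μH[s] A := by
  have himg : cellMapE d ε ξ '' A
      = (WithLp.toLp 2 (fun i => ε * (ξ i : ℝ)) : E) +ᵥ ((ε : ℝ) • A) := by
    rw [← Set.image_vadd, ← Set.image_smul, Set.image_image]
    apply Set.image_congr
    intro y _
    rw [cellMapE_eq_affine, vadd_eq_add]
  rw [himg]
  rw [hausdorffMeasure_vadd _ (Or.inl hs)]
  rw [MeasureTheory.Measure.hausdorffMeasure_smul₀ hs hε.ne' A]
  have hcoe : (ENNReal.ofReal (ε ^ s)) = ((‖ε‖₊ ^ s : NNReal) : ENNReal) := by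
    rw [ENNReal.ofReal]
    congr 1
    apply NNReal.coe_injective
    rw [NNReal.coe_rpow, Real.coe_toNNReal _ (Real.rpow_nonneg hε.le s), coe_nnnorm,
      Real.norm_eq_abs, abs_of_pos hε]
  rw [hcoe, ENNReal.smul_def, smul_eq_mul]

lemma restrict_image_cellMapE {s : ℝ} (hs : 0 ≤ s) {ε : ℝ} (hε : 0 < ε) (ξ : Fin d → ℤ)
    {Γ : Set E} (hΓ : MeasurableSet Γ) :
    (μH[s]).restrict (cellMapE d ε ξ '' Γ)
      = ENNReal.ofReal (ε ^ s) • Measure.map (cellMapE d ε ξ) ((μH[s]).restrict Γ) := by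
  have hemb := cellMapE_measurableEmbedding ε hε.ne' ξ
  ext A hA
  rw [Measure.restrict_apply hA, Measure.smul_apply, Measure.map_apply hemb.measurable hA,
    Measure.restrict_apply (hemb.measurable hA), smul_eq_mul,
    ← hausdorff_image_cellMapE hs hε ξ (cellMapE d ε ξ ⁻¹' A ∩ Γ)]
  congr 1
  rw [Set.inter_comm (cellMapE d ε ξ ⁻¹' A) Γ, Set.image_inter_preimage, Set.inter_comm]

lemma setIntegral_image_cellMapE {s : ℝ} (hs : 0 ≤ s) {ε : ℝ} (hε : 0 < ε) (ξ : Fin d → ℤ)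
    {Γ : Set E} (hΓ : MeasurableSet Γ) (f : E → ℝ) :
    ∫ x in cellMapE d ε ξ '' Γ, f x ∂μH[s]
      = ε ^ s * ∫ y in Γ, f (cellMapE d ε ξ y) ∂μH[s] := by
  rw [restrict_image_cellMapE hs hε ξ hΓ, integral_smul_measure,
    (cellMapE_measurableEmbedding ε hε.ne' ξ).integral_map,
    ENNReal.toReal_ofReal (Real.rpow_nonneg hε.le s), smul_eq_mul]

lemma integrableOn_image_cellMapE {s : ℝ} (hs : 0 ≤ s) {ε : ℝ} (hε : 0 < ε) (ξ : Fin d → ℤ)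
    {Γ : Set E} (hΓ : MeasurableSet Γ) (f : E → ℝ) :
    IntegrableOn f (cellMapE d ε ξ '' Γ) μH[s]
      ↔ IntegrableOn (fun y => f (cellMapE d ε ξ y)) Γ μH[s] := by
  unfold IntegrableOn
  rw [restrict_image_cellMapE hs hε ξ hΓ,
    integrable_smul_measure (by simp [Real.rpow_pos_of_pos hε]) (by simp),
    (cellMapE_measurableEmbedding ε hε.ne' ξ).integrable_map_iff]
  rfl

/-- The half-open cell `εξ + ε[0,1)^d`. -/
def cellSet (d : ℕ) (ε : ℝ) (ξ : Fin d → ℤ) : Set (EuclideanSpace ℝ (Fin d)) :=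
  {x | ∀ i, x i ∈ Set.Ico (ε * (ξ i : ℝ)) (ε * (ξ i : ℝ) + ε)}

lemma cellSet_measurableSet (ε : ℝ) (ξ : Fin d → ℤ) : MeasurableSet (cellSet d ε ξ) := by
  have h0 : cellSet d ε ξ
      = ⋂ i, (fun x : E => x i) ⁻¹' Set.Ico (ε * (ξ i : ℝ)) (ε * (ξ i : ℝ) + ε) := by
    ext x; simp [cellSet, Set.mem_iUnion]
  rw [h0]
  exact MeasurableSet.iInter fun i => ((measurable_pi_apply i).comp (WithLp.measurable_ofLp 2 _)) measurableSet_Ico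

lemma volume_cellSet {ε : ℝ} (hε : 0 < ε) (ξ : Fin d → ℤ) :
    volume (cellSet d ε ξ) = ENNReal.ofReal (ε ^ d) := by
  have hpre : cellSet d ε ξ = (MeasurableEquiv.toLp 2 (Fin d → ℝ)).symm ⁻¹'
      (Set.univ.pi fun i => Set.Ico (ε * (ξ i : ℝ)) (ε * (ξ i : ℝ) + ε)) := by
    ext x
    simp only [cellSet, Set.mem_preimage, Set.mem_pi, Set.mem_univ, forall_true_left,
      Set.mem_setOf_eq]
    rfl
  rw [hpre, (EuclideanSpace.volume_preserving_symm_measurableEquiv_toLp (Fin d)).measure_preimage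
    ((MeasurableSet.univ_pi fun i => measurableSet_Ico).nullMeasurableSet),
    volume_pi_pi]
  simp only [Real.volume_Ico, add_sub_cancel_left]
  rw [Finset.prod_const, ← ENNReal.ofReal_pow hε.le]
  simp

lemma cellSet_eq_unique {ε : ℝ} (hε : 0 < ε) {x : E} {ξ ξ' : Fin d → ℤ}
    (h : x ∈ cellSet d ε ξ) (h' : x ∈ cellSet d ε ξ') : ξ = ξ' := by
  funext i
  have h1 := h i
  have h2 := h' i
  simp only [Set.mem_Ico] at h1 h2
  have habs : |(ξ i : ℝ) - (ξ' i : ℝ)| < 1 := by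
    rw [abs_sub_lt_iff]
    constructor <;> nlinarith
  have habs' : |(ξ i - ξ' i : ℤ)| < 1 := by
    rw [← @Int.cast_lt ℝ, Int.cast_abs]
    push_cast
    simpa using habs
  rw [abs_lt] at habs'
  omega

lemma mem_cellSet_floor {ε : ℝ} (hε : 0 < ε) (x : E) :
    x ∈ cellSet d ε (fun i => ⌊x i / ε⌋) := by
  intro i
  simp only [Set.mem_Ico]
  constructor
  · calc ε * (⌊x i / ε⌋ : ℝ) ≤ ε * (x i / ε) :=
        mul_le_mul_of_nonneg_left (Int.floor_le _) hε.le
      _ = x i := by field_simp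
  · have h1 : x i / ε < ⌊x i / ε⌋ + 1 := Int.lt_floor_add_one _
    calc x i = ε * (x i / ε) := by field_simp
      _ < ε * ((⌊x i / ε⌋ : ℝ) + 1) := by
          exact mul_lt_mul_of_pos_left h1 hε
      _ = ε * (⌊x i / ε⌋ : ℝ) + ε := by ring

lemma cellSet_subset_image_cube {ε : ℝ} (hε : 0 < ε) (ξ : Fin d → ℤ) :
    cellSet d ε ξ ⊆ cellMapE d ε ξ '' {y : E | ∀ i, y i ∈ Set.Icc (0 : ℝ) 1} := by
  intro x hx
  refine ⟨(WithLp.toLp 2 (fun i => (x i - ε * (ξ i : ℝ)) / ε) : E), ?_, ?_⟩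
  · intro i
    have h := hx i
    simp only [Set.mem_Ico] at h
    constructor
    · apply div_nonneg (by linarith) hε.le
    · rw [div_le_one hε]; linarith
  · ext i
    show ε * (ξ i : ℝ) + ε * ((x i - ε * (ξ i : ℝ)) / ε) = x i
    field_simp; ring

lemma image_open_cube_subset_cellSet {ε : ℝ} (hε : 0 < ε) (ξ : Fin d → ℤ)
    {Γ : Set E} (hΓ : Γ ⊆ {y : E | ∀ i, y i ∈ Set.Ioo (0 : ℝ) 1}) :
    cellMapE d ε ξ '' Γ ⊆ cellSet d ε ξ := by
  rintro x ⟨y, hy, rfl⟩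
  intro i
  have h := hΓ hy i
  simp only [Set.mem_Ioo] at h
  show ε * (ξ i : ℝ) + ε * y i ∈ Set.Ico _ _
  constructor
  · nlinarith
  · nlinarith

lemma disjoint_image_cellMapE {ε : ℝ} (hε : 0 < ε) {Γ : Set E}
    (hΓ : Γ ⊆ {y : E | ∀ i, y i ∈ Set.Ioo (0 : ℝ) 1}) {ξ ξ' : Fin d → ℤ} (h : ξ ≠ ξ') :
    Disjoint (cellMapE d ε ξ '' Γ) (cellMapE d ε ξ' '' Γ) := by
  rw [Set.disjoint_left]
  intro x hx hx'
  exact h (cellSet_eq_unique hε (image_open_cube_subset_cellSet hε ξ hΓ hx)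
    (image_open_cube_subset_cellSet hε ξ' hΓ hx'))

/-- Finiteness of the set of cells fitting inside a bounded set. -/
lemma finite_cells {ε : ℝ} (hε : 0 < ε) {Ω : Set E} (hΩb : Bornology.IsBounded Ω) :
    Set.Finite {ξ : Fin d → ℤ |
      cellMapE d ε ξ '' {y : E | ∀ i, y i ∈ Set.Icc (0 : ℝ) 1} ⊆ Ω} := by
  obtain ⟨r, hr⟩ := hΩb.subset_closedBall 0
  set M : ℤ := ⌈r / ε⌉
  apply Set.Finite.subset (Set.Finite.pi fun i : Fin d => Set.finite_Icc (-M) M)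
  intro ξ hξ
  simp only [Set.mem_setOf_eq] at hξ
  have h0 : (0 : E) ∈ {y : E | ∀ i, y i ∈ Set.Icc (0 : ℝ) 1} := by
    intro i; simp [show (0:E) i = 0 from rfl]
  have hmem : cellMapE d ε ξ 0 ∈ Ω := hξ ⟨0, h0, rfl⟩
  have hball := hr hmem
  simp only [Metric.mem_closedBall, dist_zero_right] at hball
  intro i _
  have hcoord : |cellMapE d ε ξ 0 i| ≤ r := (abs_coord_le_norm _ i).trans hball
  have he : (cellMapE d ε ξ 0) i = ε * (ξ i : ℝ) := by
    show ε * (ξ i : ℝ) + ε * (0:E) i = ε * (ξ i : ℝ)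
    simp [show (0:E) i = 0 from rfl]
  rw [he, abs_mul, abs_of_pos hε] at hcoord
  have hle : |(ξ i : ℝ)| ≤ r / ε := by
    rw [le_div_iff₀ hε]; linarith [hcoord]
  have hle2 : |(ξ i : ℝ)| ≤ (M : ℝ) := hle.trans (Int.le_ceil _)
  have habs : |ξ i| ≤ M := by
    rwa [← @Int.cast_le ℝ, Int.cast_abs]
  rw [abs_le] at habs
  simp only [Set.mem_Icc]
  omega

end Geometry

end Helpers

set_option maxHeartbeats 1000000 in
/-- Two-scale compactness on oscillating surfaces: a sequence with
`ε_n ∫_{Γ^{ε_n}} v_n² dH^{d−1}` bounded has a subsequence two-scale converging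
(in the surface sense) to some `v ∈ L²(Ω × Γ)`. -/
theorem two_scale_compactness_surfaces
    (d : ℕ) (hd : 2 ≤ d)
    (Γ : Set (EuclideanSpace ℝ (Fin d))) (hΓc : IsCompact Γ)
    (hΓsub : Γ ⊆ {y : EuclideanSpace ℝ (Fin d) | ∀ i, y i ∈ Set.Ioo (0 : ℝ) 1})
    (hΓpos : 0 < μH[(d : ℝ) - 1] Γ) (hΓfin : μH[(d : ℝ) - 1] Γ < ⊤)
    (Ω : Set (EuclideanSpace ℝ (Fin d))) (hΩo : IsOpen Ω) (hΩb : Bornology.IsBounded Ω)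
    (εn : ℕ → ℝ) (hεpos : ∀ n, 0 < εn n) (hεlim : Tendsto εn atTop (𝓝 0))
    (v : ℕ → EuclideanSpace ℝ (Fin d) → ℝ) (hmeas : ∀ n, Measurable (v n))
    (hint : ∀ n, IntegrableOn (fun x => v n x ^ 2) (membranes d (εn n) Ω Γ) μH[(d : ℝ) - 1])
    (C : ℝ)
    (hbd : ∀ n, εn n * ∫ x in membranes d (εn n) Ω Γ, v n x ^ 2 ∂μH[(d : ℝ) - 1] ≤ C) :
    ∃ σ : ℕ → ℕ, StrictMono σ ∧
      ∃ v₀ : EuclideanSpace ℝ (Fin d) × EuclideanSpace ℝ (Fin d) → ℝ,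
        MemLp v₀ 2 ((volume.restrict Ω).prod ((μH[(d : ℝ) - 1]).restrict Γ)) ∧
        ∀ φ, IsAdmissibleTestE d Ω φ →
          Tendsto
            (fun k => εn (σ k) *
              ∫ x in membranes d (εn (σ k)) Ω Γ,
                v (σ k) x * φ x (WithLp.toLp 2 (fun i => x i / εn (σ k)) : EuclideanSpace ℝ (Fin d))
                ∂μH[(d : ℝ) - 1])
            atTop
            (𝓝 (∫ x in Ω, ∫ y in Γ, v₀ (x, y) * φ x y ∂μH[(d : ℝ) - 1])) := by
  classical
  have h2d : (2:ℝ) ≤ (d:ℝ) := by exact_mod_cast hd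
  have hs : (0:ℝ) ≤ (d : ℝ) - 1 := by linarith
  have hΓm : MeasurableSet Γ := hΓc.isClosed.measurableSet
  have hΩm : MeasurableSet Ω := hΩo.measurableSet
  set μ : Measure (EuclideanSpace ℝ (Fin d) × EuclideanSpace ℝ (Fin d)) :=
    (volume.restrict Ω).prod ((μH[(d:ℝ)-1]).restrict Γ) with hμdef
  haveI hfinΩ : IsFiniteMeasure (volume.restrict Ω) := by
    constructor
    rw [Measure.restrict_apply_univ]
    exact hΩb.measure_lt_top
  haveI hfinΓ : IsFiniteMeasure ((μH[(d:ℝ)-1]).restrict Γ) := by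
    constructor
    rw [Measure.restrict_apply_univ]
    exact hΓfin
  haveI : IsFiniteMeasure μ := by rw [hμdef]; infer_instance
  haveI : SFinite μ := inferInstance
  haveI : MeasureTheory.IsSeparable μ := inferInstance
  haveI : Fact ((2:ENNReal) ≠ ⊤) := ⟨by norm_num⟩
  haveI : TopologicalSpace.SeparableSpace (Lp ℝ 2 μ) := inferInstance
  -- the finite family of cells
  have hfin : ∀ n, Set.Finite {ξ : Fin d → ℤ |
      cellMapE d (εn n) ξ '' {y : EuclideanSpace ℝ (Fin d) | ∀ i, y i ∈ Set.Icc (0:ℝ) 1} ⊆ Ω} :=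
    fun n => finite_cells (hεpos n) hΩb
  set Fn : ℕ → Finset (Fin d → ℤ) := fun n => (hfin n).toFinset with hFn
  have hFnmem : ∀ n (ξ : Fin d → ℤ), ξ ∈ Fn n ↔
      cellMapE d (εn n) ξ '' {y : EuclideanSpace ℝ (Fin d) | ∀ i, y i ∈ Set.Icc (0:ℝ) 1} ⊆ Ω := by
    intro n ξ
    simp [hFn, Set.Finite.mem_toFinset]
  have hmem_eq : ∀ n, membranes d (εn n) Ω Γ = ⋃ ξ ∈ Fn n, cellMapE d (εn n) ξ '' Γ := by
    intro n
    rw [membranes]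
    ext x
    simp only [Set.mem_iUnion, Set.mem_setOf_eq]
    constructor
    · rintro ⟨ξ, hξ, hx⟩
      exact ⟨ξ, (hFnmem n ξ).2 hξ, hx⟩
    · rintro ⟨ξ, hξ, hx⟩
      exact ⟨ξ, (hFnmem n ξ).1 hξ, hx⟩
  have hTΓm : ∀ n (ξ : Fin d → ℤ), MeasurableSet (cellMapE d (εn n) ξ '' Γ) :=
    fun n ξ => ((hΓc.image (cellMapE_continuous _ _)).isClosed).measurableSet
  have hdisj : ∀ n, (↑(Fn n) : Set (Fin d → ℤ)).Pairwise
      (Function.onFun Disjoint fun ξ => cellMapE d (εn n) ξ '' Γ) :=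
    fun n ξ _ ξ' _ hne => disjoint_image_cellMapE (hεpos n) hΓsub hne
  have hdecomp : ∀ n (f : EuclideanSpace ℝ (Fin d) → ℝ),
      (∀ ξ ∈ Fn n, IntegrableOn f (cellMapE d (εn n) ξ '' Γ) μH[(d:ℝ)-1]) →
      ∫ x in membranes d (εn n) Ω Γ, f x ∂μH[(d:ℝ)-1]
        = ∑ ξ ∈ Fn n, ∫ x in cellMapE d (εn n) ξ '' Γ, f x ∂μH[(d:ℝ)-1] := by
    intro n f hf
    rw [hmem_eq n]
    exact integral_biUnion_finset _ (fun ξ _ => hTΓm n ξ) (hdisj n) hf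
  have hsub : ∀ n, ∀ ξ ∈ Fn n, cellMapE d (εn n) ξ '' Γ ⊆ membranes d (εn n) Ω Γ := by
    intro n ξ hξ
    rw [hmem_eq n]
    intro x hx
    exact Set.mem_biUnion hξ hx
  have hmemfin : ∀ n, μH[(d:ℝ)-1] (membranes d (εn n) Ω Γ) < ⊤ := by
    intro n
    rw [hmem_eq n]
    refine lt_of_le_of_lt (measure_biUnion_finset_le _ _) ?_
    rw [ENNReal.sum_lt_top]
    intro ξ _
    rw [hausdorff_image_cellMapE hs (hεpos n) ξ Γ]
    exact ENNReal.mul_lt_top ENNReal.ofReal_lt_top hΓfin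
  have hvint : ∀ n, IntegrableOn (v n) (membranes d (εn n) Ω Γ) μH[(d:ℝ)-1] := by
    intro n
    haveI : IsFiniteMeasure ((μH[(d:ℝ)-1]).restrict (membranes d (εn n) Ω Γ)) :=
      ⟨by rw [Measure.restrict_apply_univ]; exact hmemfin n⟩
    exact ((memLp_two_iff_integrable_sq (hmeas n).aestronglyMeasurable).2 (hint n)).integrable
      (by norm_num)
  have hvξ2 : ∀ n, ∀ ξ ∈ Fn n,
      IntegrableOn (fun y => v n (cellMapE d (εn n) ξ y) ^ 2) Γ μH[(d:ℝ)-1] := by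
    intro n ξ hξ
    exact (integrableOn_image_cellMapE hs (hεpos n) ξ hΓm (fun x => v n x ^ 2)).1
      ((hint n).mono_set (hsub n ξ hξ))
  have hvξ1 : ∀ n, ∀ ξ ∈ Fn n,
      IntegrableOn (fun y => v n (cellMapE d (εn n) ξ y)) Γ μH[(d:ℝ)-1] := by
    intro n ξ hξ
    exact (integrableOn_image_cellMapE hs (hεpos n) ξ hΓm (v n)).1
      ((hvint n).mono_set (hsub n ξ hξ))
  -- cells
  have hcellm : ∀ n (ξ : Fin d → ℤ), MeasurableSet (cellSet d (εn n) ξ) :=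
    fun n ξ => cellSet_measurableSet _ _
  have hcellΩ : ∀ n, ∀ ξ ∈ Fn n, cellSet d (εn n) ξ ⊆ Ω := by
    intro n ξ hξ
    exact (cellSet_subset_image_cube (hεpos n) ξ).trans ((hFnmem n ξ).1 hξ)
  have hprodm : ∀ n (ξ : Fin d → ℤ),
      MeasurableSet (cellSet d (εn n) ξ ×ˢ (Set.univ : Set (EuclideanSpace ℝ (Fin d)))) :=
    fun n ξ => (hcellm n ξ).prod MeasurableSet.univ
  have huniq : ∀ n, ∀ p : EuclideanSpace ℝ (Fin d) × EuclideanSpace ℝ (Fin d),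
      ∀ ξ ∈ Fn n, ∀ ξ' ∈ Fn n,
      p ∈ cellSet d (εn n) ξ ×ˢ (Set.univ : Set (EuclideanSpace ℝ (Fin d))) →
      p ∈ cellSet d (εn n) ξ' ×ˢ (Set.univ : Set (EuclideanSpace ℝ (Fin d))) → ξ = ξ' := by
    intro n p ξ _ ξ' _ h h'
    exact cellSet_eq_unique (hεpos n) h.1 h'.1
  have hrestr : ∀ n, ∀ ξ ∈ Fn n,
      μ.restrict (cellSet d (εn n) ξ ×ˢ (Set.univ : Set (EuclideanSpace ℝ (Fin d))))
        = (volume.restrict (cellSet d (εn n) ξ)).prod ((μH[(d:ℝ)-1]).restrict Γ) := by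
    intro n ξ hξ
    rw [hμdef, ← Measure.prod_restrict, Measure.restrict_restrict (hcellm n ξ),
      Set.inter_eq_self_of_subset_left (hcellΩ n ξ hξ), Measure.restrict_univ]
  have hkey : ∀ n, ∀ ξ ∈ Fn n, ∀ g : EuclideanSpace ℝ (Fin d) → ℝ,
      ∫ p, (cellSet d (εn n) ξ ×ˢ (Set.univ : Set (EuclideanSpace ℝ (Fin d)))).indicator
          (fun q => g q.2) p ∂μ
        = εn n ^ d * ∫ y in Γ, g y ∂μH[(d:ℝ)-1] := by
    intro n ξ hξ g
    rw [integral_indicator (hprodm n ξ)]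
    rw [hrestr n ξ hξ]
    have hmul := integral_prod_mul (μ := volume.restrict (cellSet d (εn n) ξ))
      (ν := (μH[(d:ℝ)-1]).restrict Γ) (fun _ => (1:ℝ)) g
    simp only [one_mul] at hmul
    rw [hmul, integral_const, measureReal_restrict_apply_univ, measureReal_def, volume_cellSet (hεpos n) ξ,
      ENNReal.toReal_ofReal (pow_nonneg (hεpos n).le d), smul_eq_mul, mul_one]
  have hIterm : ∀ n, ∀ ξ ∈ Fn n, ∀ g : EuclideanSpace ℝ (Fin d) → ℝ,
      IntegrableOn g Γ μH[(d:ℝ)-1] →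
      Integrable ((cellSet d (εn n) ξ ×ˢ (Set.univ : Set (EuclideanSpace ℝ (Fin d)))).indicator
        (fun q => g q.2)) μ := by
    intro n ξ hξ g hg
    rw [integrable_indicator_iff (hprodm n ξ)]
    unfold IntegrableOn
    rw [hrestr n ξ hξ]
    haveI : IsFiniteMeasure (volume.restrict (cellSet d (εn n) ξ)) :=
      ⟨by rw [Measure.restrict_apply_univ, volume_cellSet (hεpos n) ξ]
          exact ENNReal.ofReal_lt_top⟩
    have := (integrable_const (μ := volume.restrict (cellSet d (εn n) ξ)) (1:ℝ)).mul_prod hg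
    simpa using this
  -- the unfolded sequence
  set u : ℕ → EuclideanSpace ℝ (Fin d) × EuclideanSpace ℝ (Fin d) → ℝ :=
    fun n p => ∑ ξ ∈ Fn n,
      (cellSet d (εn n) ξ ×ˢ (Set.univ : Set (EuclideanSpace ℝ (Fin d)))).indicator
        (fun q => v n (cellMapE d (εn n) ξ q.2)) p with hudef
  have humeas : ∀ n, Measurable (u n) := by
    intro n
    apply Finset.measurable_sum
    intro ξ _
    exact (((hmeas n).comp
      ((cellMapE_continuous (εn n) ξ).measurable.comp measurable_snd))).indicator (hprodm n ξ)
  have husq : ∀ n, (fun p => u n p ^ 2)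
      = fun p => ∑ ξ ∈ Fn n,
          (cellSet d (εn n) ξ ×ˢ (Set.univ : Set (EuclideanSpace ℝ (Fin d)))).indicator
            (fun q => v n (cellMapE d (εn n) ξ q.2) ^ 2) p := by
    intro n
    funext p
    simp only [hudef]
    rw [sq, sum_indicator_mul (huniq n) _ _ p]
    refine Finset.sum_congr rfl fun ξ _ => ?_
    have hf : (fun q : EuclideanSpace ℝ (Fin d) × EuclideanSpace ℝ (Fin d) =>
        v n (cellMapE d (εn n) ξ q.2) * v n (cellMapE d (εn n) ξ q.2))
        = fun q => v n (cellMapE d (εn n) ξ q.2) ^ 2 := by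
      funext q; rw [sq]
    rw [hf]
  have hu2int : ∀ n, Integrable (fun p => u n p ^ 2) μ := by
    intro n
    rw [husq n]
    exact integrable_finset_sum _ fun ξ hξ => hIterm n ξ hξ _ (hvξ2 n ξ hξ)
  have humem : ∀ n, MemLp (u n) 2 μ :=
    fun n => (memLp_two_iff_integrable_sq (humeas n).aestronglyMeasurable).2 (hu2int n)
  -- the power bookkeeping
  have hpow : ∀ n, εn n * εn n ^ ((d:ℝ)-1) = εn n ^ d := by
    intro n
    have h2 : εn n ^ ((1:ℝ)) * εn n ^ ((d:ℝ)-1) = εn n ^ ((1:ℝ)+((d:ℝ)-1)) :=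
      (Real.rpow_add (hεpos n) _ _).symm
    rw [Real.rpow_one] at h2
    rw [h2]
    have h3 : (1:ℝ) + ((d:ℝ)-1) = (d:ℕ) := by push_cast; ring
    rw [h3, Real.rpow_natCast]
  -- the L² bound
  have hL1 : ∀ n, ∫ p, u n p ^ 2 ∂μ
      = εn n * ∫ x in membranes d (εn n) Ω Γ, v n x ^ 2 ∂μH[(d:ℝ)-1] := by
    intro n
    rw [husq n, integral_finset_sum _ (fun ξ hξ => hIterm n ξ hξ _ (hvξ2 n ξ hξ))]
    rw [hdecomp n _ (fun ξ hξ => (hint n).mono_set (hsub n ξ hξ)), Finset.mul_sum]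
    apply Finset.sum_congr rfl
    intro ξ hξ
    rw [hkey n ξ hξ (fun y => v n (cellMapE d (εn n) ξ y) ^ 2)]
    rw [setIntegral_image_cellMapE hs (hεpos n) ξ hΓm (fun x => v n x ^ 2)]
    rw [← mul_assoc, hpow n]
  have hC0 : 0 ≤ C := by
    have h1 : 0 ≤ εn 0 * ∫ x in membranes d (εn 0) Ω Γ, v 0 x ^ 2 ∂μH[(d:ℝ)-1] :=
      mul_nonneg (hεpos 0).le (setIntegral_nonneg ((hmem_eq 0) ▸
        (Finset.measurableSet_biUnion _ fun ξ _ => hTΓm 0 ξ)) fun x _ => sq_nonneg _)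
    exact h1.trans (hbd 0)
  set U : ℕ → Lp ℝ 2 μ := fun n => (humem n).toLp (u n) with hUdef
  have hinner : ∀ n (g : EuclideanSpace ℝ (Fin d) × EuclideanSpace ℝ (Fin d) → ℝ)
      (hg : MemLp g 2 μ),
      (inner ℝ (U n) (hg.toLp g) : ℝ) = ∫ p, u n p * g p ∂μ := by
    intro n g hg
    rw [L2.inner_def]
    refine integral_congr_ae ?_
    have h1 : (U n : EuclideanSpace ℝ (Fin d) × EuclideanSpace ℝ (Fin d) → ℝ) =ᵐ[μ] u n := by
      simp only [hUdef]
      exact (humem n).coeFn_toLp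
    filter_upwards [h1, hg.coeFn_toLp] with p hp1 hp2
    rw [hp1, hp2]
    simp [RCLike.inner_apply, mul_comm]
  have hUnorm : ∀ n, ‖U n‖ ≤ Real.sqrt C := by
    intro n
    have h2 : (inner ℝ (U n) (U n) : ℝ) = ∫ p, u n p * u n p ∂μ := hinner n (u n) (humem n)
    have hnsq : ‖U n‖ ^ 2 = ∫ p, u n p ^ 2 ∂μ := by
      rw [← real_inner_self_eq_norm_sq, h2]
      simp [sq]
    have hle : ‖U n‖ ^ 2 ≤ C := by
      rw [hnsq, hL1 n]; exact hbd n
    calc ‖U n‖ = Real.sqrt (‖U n‖ ^ 2) := (Real.sqrt_sq (norm_nonneg _)).symm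
      _ ≤ Real.sqrt C := Real.sqrt_le_sqrt hle
  -- extract the weakly convergent subsequence
  obtain ⟨σ, hσ, w, hw⟩ := weak_seq_compact' U (Real.sqrt C) hUnorm
  refine ⟨σ, hσ, (w : EuclideanSpace ℝ (Fin d) × EuclideanSpace ℝ (Fin d) → ℝ),
    Lp.memLp w, ?_⟩
  intro φ hφ
  obtain ⟨hφc, ⟨K, hKc, hKΩ, hK0⟩, hφper⟩ := hφ
  -- a uniform bound for φ
  have hcubec : IsCompact {y : EuclideanSpace ℝ (Fin d) | ∀ i, y i ∈ Set.Icc (0:ℝ) 1} := by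
    have hclosed : IsClosed {y : EuclideanSpace ℝ (Fin d) | ∀ i, y i ∈ Set.Icc (0:ℝ) 1} := by
      have h0 : {y : EuclideanSpace ℝ (Fin d) | ∀ i, y i ∈ Set.Icc (0:ℝ) 1}
          = ⋂ i, (fun y : EuclideanSpace ℝ (Fin d) => y i) ⁻¹' Set.Icc (0:ℝ) 1 := by
        ext y; simp
      rw [h0]
      exact isClosed_iInter fun i => (isClosed_Icc).preimage (PiLp.continuous_apply 2 _ i)
    have hbdd : Bornology.IsBounded
        {y : EuclideanSpace ℝ (Fin d) | ∀ i, y i ∈ Set.Icc (0:ℝ) 1} := by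
      apply Bornology.IsBounded.subset
        (Metric.isBounded_closedBall (x := (0:EuclideanSpace ℝ (Fin d))) (r := Real.sqrt d * 1))
      intro y hy
      simp only [Metric.mem_closedBall, dist_zero_right]
      refine norm_le_of_coord zero_le_one fun i => ?_
      have h1 := hy i
      rw [Set.mem_Icc] at h1
      rw [abs_le]
      exact ⟨by linarith [h1.1], h1.2⟩
    exact Metric.isCompact_of_isClosed_isBounded hclosed hbdd
  obtain ⟨B0, hB0⟩ := (hKc.prod hcubec).exists_bound_of_continuousOn hφc.continuousOn
  set B := max B0 0 with hBdef
  have hfract : ∀ x (y : EuclideanSpace ℝ (Fin d)),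
      φ x y = φ x (WithLp.toLp 2 (fun i => Int.fract (y i))) := by
    intro x y
    have h1 := hφper x (WithLp.toLp 2 (fun i => Int.fract (y i)) : EuclideanSpace ℝ (Fin d)) (fun i => ⌊y i⌋)
    have h2 : (WithLp.toLp 2 (fun i => (WithLp.toLp 2 (fun i => Int.fract (y i)) : EuclideanSpace ℝ (Fin d)) i
        + ((⌊y i⌋ : ℤ) : ℝ)) : EuclideanSpace ℝ (Fin d)) = y := by
      ext i
      show Int.fract (y i) + (⌊y i⌋ : ℝ) = y i
      rw [add_comm]
      exact Int.floor_add_fract _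
    rw [h2] at h1
    exact h1
  have hφbd : ∀ x y, |φ x y| ≤ B := by
    intro x y
    by_cases hxK : x ∈ K
    · rw [hfract x y]
      have hmem : (x, (WithLp.toLp 2 (fun i => Int.fract (y i)) : EuclideanSpace ℝ (Fin d)))
          ∈ K ×ˢ {y : EuclideanSpace ℝ (Fin d) | ∀ i, y i ∈ Set.Icc (0:ℝ) 1} := by
        refine ⟨hxK, fun i => ?_⟩
        exact ⟨Int.fract_nonneg (y i), (Int.fract_lt_one (y i)).le⟩
      have h3 := hB0 _ hmem
      rw [Real.norm_eq_abs] at h3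
      exact h3.trans (le_max_left _ _)
    · rw [hK0 x hxK]
      simp [hBdef]
  have hB0' : 0 ≤ B := le_max_right _ _
  -- uniform continuity in the first variable, uniformly for y ∈ Γ
  obtain ⟨ρ, hρpos, hρsub⟩ := hKc.exists_thickening_subset_open hΩo hKΩ
  have hUC : ∀ δ : ℝ, 0 < δ → ∃ η : ℝ, 0 < η ∧ η ≤ 1 ∧
      ∀ x x' (y : EuclideanSpace ℝ (Fin d)),
      y ∈ Γ → dist x x' ≤ η → |φ x y - φ x' y| ≤ δ := by
    intro δ hδ
    have hMcpt : IsCompact ((Metric.cthickening 1 K) ×ˢ Γ) := hKc.cthickening.prod hΓc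
    have hucont : UniformContinuousOn
        (fun p : EuclideanSpace ℝ (Fin d) × EuclideanSpace ℝ (Fin d) => φ p.1 p.2)
        ((Metric.cthickening 1 K) ×ˢ Γ) :=
      hMcpt.uniformContinuousOn_of_continuous hφc.continuousOn
    rw [Metric.uniformContinuousOn_iff] at hucont
    obtain ⟨η0, hη0, hη⟩ := hucont δ hδ
    refine ⟨min (η0/2) 1, by positivity, min_le_right _ _, ?_⟩
    intro x x' y hyΓ hdist
    have hmain : ∀ a b : EuclideanSpace ℝ (Fin d), a ∈ K →
        dist a b ≤ min (η0/2) 1 → |φ a y - φ b y| ≤ δ := by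
      intro a b ha hab
      have ha1 : a ∈ Metric.cthickening 1 K := Metric.self_subset_cthickening _ ha
      have hb1 : b ∈ Metric.cthickening 1 K := by
        apply Metric.mem_cthickening_of_dist_le b a 1 K ha
        rw [dist_comm]
        exact hab.trans (min_le_right _ _)
      have hp := hη (a, y) ⟨ha1, hyΓ⟩ (b, y) ⟨hb1, hyΓ⟩ ?_
      · rw [Real.dist_eq] at hp; exact hp.le
      · rw [Prod.dist_eq]
        simp only [dist_self]
        have h1 : dist a b < η0 := lt_of_le_of_lt (hab.trans (min_le_left _ _)) (by linarith)
        exact max_lt h1 hη0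
    by_cases hx : x ∈ K
    · exact hmain x x' hx hdist
    · by_cases hx' : x' ∈ K
      · rw [abs_sub_comm]
        exact hmain x' x hx' (by rwa [dist_comm])
      · rw [hK0 x hx, hK0 x' hx']
        simpa using hδ.le
  -- the unfolded test function
  set Φ : ℕ → EuclideanSpace ℝ (Fin d) × EuclideanSpace ℝ (Fin d) → ℝ :=
    fun n p => ∑ ξ ∈ Fn n,
      (cellSet d (εn n) ξ ×ˢ (Set.univ : Set (EuclideanSpace ℝ (Fin d)))).indicator
        (fun q => φ (cellMapE d (εn n) ξ q.2) q.2) p with hΦdef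
  have hφtermc : ∀ n (ξ : Fin d → ℤ),
      Continuous (fun q : EuclideanSpace ℝ (Fin d) × EuclideanSpace ℝ (Fin d) =>
        φ (cellMapE d (εn n) ξ q.2) q.2) :=
    fun n ξ => hφc.comp (((cellMapE_continuous _ _).comp continuous_snd).prodMk continuous_snd)
  have hΦmeas : ∀ n, Measurable (Φ n) := by
    intro n
    apply Finset.measurable_sum
    intro ξ _
    exact (hφtermc n ξ).measurable.indicator (hprodm n ξ)
  have hΦbd : ∀ n p, |Φ n p| ≤ B := by
    intro n p
    simp only [hΦdef]
    by_cases h : ∃ ξ ∈ Fn n,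
        p ∈ cellSet d (εn n) ξ ×ˢ (Set.univ : Set (EuclideanSpace ℝ (Fin d)))
    · obtain ⟨ξ₀, hξ₀, hp⟩ := h
      rw [sum_indicator_unique (huniq n) _ hξ₀ hp]
      exact hφbd _ _
    · push_neg at h
      rw [sum_indicator_of_not_mem _ h]
      simpa using hB0'
  have hΦmem : ∀ n, MemLp (Φ n) 2 μ := by
    intro n
    refine MemLp.mono_exponent (memLp_top_of_bound (hΦmeas n).aestronglyMeasurable B
      (Eventually.of_forall fun p => ?_)) le_top
    rw [Real.norm_eq_abs]; exact hΦbd n p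
  have hψm : Measurable (fun p : EuclideanSpace ℝ (Fin d) × EuclideanSpace ℝ (Fin d) =>
      φ p.1 p.2) := hφc.measurable
  have hψmem : MemLp (fun p : EuclideanSpace ℝ (Fin d) × EuclideanSpace ℝ (Fin d) =>
      φ p.1 p.2) 2 μ := by
    refine MemLp.mono_exponent (memLp_top_of_bound hψm.aestronglyMeasurable B
      (Eventually.of_forall fun p => ?_)) le_top
    rw [Real.norm_eq_abs]; exact hφbd _ _
  set Ψ : Lp ℝ 2 μ :=
    hψmem.toLp (fun p : EuclideanSpace ℝ (Fin d) × EuclideanSpace ℝ (Fin d) => φ p.1 p.2)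
    with hΨdef
  -- the key identity: the two-scale integral is an inner product
  have hφcompc : ∀ n, Continuous (fun x : EuclideanSpace ℝ (Fin d) =>
      φ x (WithLp.toLp 2 (fun i => x i / εn n) : EuclideanSpace ℝ (Fin d))) := by
    intro n
    exact hφc.comp
      (continuous_id.prodMk ((PiLp.continuous_toLp 2 _).comp (continuous_pi fun i => (PiLp.continuous_apply 2 _ i).div_const _)))
  have hintφn : ∀ n, IntegrableOn (fun x => v n x *
      φ x (WithLp.toLp 2 (fun i => x i / εn n) : EuclideanSpace ℝ (Fin d)))
      (membranes d (εn n) Ω Γ) μH[(d:ℝ)-1] := by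
    intro n
    have hb : IntegrableOn (fun x =>
        (φ x (WithLp.toLp 2 (fun i => x i / εn n) : EuclideanSpace ℝ (Fin d))) * v n x)
        (membranes d (εn n) Ω Γ) μH[(d:ℝ)-1] :=
      Integrable.bdd_mul (hvint n) ((hφcompc n).aestronglyMeasurable.restrict)
        (c := B) (Eventually.of_forall fun x => by rw [Real.norm_eq_abs]; exact hφbd _ _)
    have heq : (fun x => v n x * φ x (WithLp.toLp 2 (fun i => x i / εn n) : EuclideanSpace ℝ (Fin d)))
        = fun x => (φ x (WithLp.toLp 2 (fun i => x i / εn n) : EuclideanSpace ℝ (Fin d))) * v n x := by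
      funext x; ring
    rw [heq]; exact hb
  have hgξint : ∀ n, ∀ ξ ∈ Fn n, IntegrableOn (fun y =>
      v n (cellMapE d (εn n) ξ y) * φ (cellMapE d (εn n) ξ y) y) Γ μH[(d:ℝ)-1] := by
    intro n ξ hξ
    have hc : Continuous (fun y : EuclideanSpace ℝ (Fin d) =>
        φ (cellMapE d (εn n) ξ y) y) :=
      hφc.comp ((cellMapE_continuous _ _).prodMk continuous_id)
    have hb := Integrable.bdd_mul (hvξ1 n ξ hξ) hc.aestronglyMeasurable.restrict
      (c := B) (Eventually.of_forall fun y => by rw [Real.norm_eq_abs]; exact hφbd _ _)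
    have heq : (fun y => v n (cellMapE d (εn n) ξ y) * φ (cellMapE d (εn n) ξ y) y)
        = fun y => φ (cellMapE d (εn n) ξ y) y * v n (cellMapE d (εn n) ξ y) := by
      funext y; ring
    rw [heq]; exact hb
  have hLHSn : ∀ n, εn n * ∫ x in membranes d (εn n) Ω Γ,
      v n x * φ x (WithLp.toLp 2 (fun i => x i / εn n) : EuclideanSpace ℝ (Fin d)) ∂μH[(d:ℝ)-1]
      = (inner ℝ (U n) ((hΦmem n).toLp (Φ n)) : ℝ) := by
    intro n
    rw [hinner n (Φ n) (hΦmem n)]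
    have hpt : (fun p => u n p * Φ n p) = fun p => ∑ ξ ∈ Fn n,
        (cellSet d (εn n) ξ ×ˢ (Set.univ : Set (EuclideanSpace ℝ (Fin d)))).indicator
          (fun q => v n (cellMapE d (εn n) ξ q.2) * φ (cellMapE d (εn n) ξ q.2) q.2) p := by
      funext p
      simp only [hudef, hΦdef]
      exact sum_indicator_mul (huniq n) _ _ p
    rw [hpt]
    rw [integral_finset_sum _ (fun ξ hξ => hIterm n ξ hξ
      (fun y => v n (cellMapE d (εn n) ξ y) * φ (cellMapE d (εn n) ξ y) y)
      (hgξint n ξ hξ))]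
    rw [hdecomp n _ (fun ξ hξ => (hintφn n).mono_set (hsub n ξ hξ)), Finset.mul_sum]
    apply Finset.sum_congr rfl
    intro ξ hξ
    rw [hkey n ξ hξ (fun y => v n (cellMapE d (εn n) ξ y) * φ (cellMapE d (εn n) ξ y) y)]
    rw [setIntegral_image_cellMapE hs (hεpos n) ξ hΓm
      (fun x => v n x * φ x (WithLp.toLp 2 (fun i => x i / εn n) : EuclideanSpace ℝ (Fin d)))]
    rw [← mul_assoc, hpow n]
    congr 1
    refine setIntegral_congr_fun hΓm fun y hy => ?_
    have hcoord : (WithLp.toLp 2 (fun i => (cellMapE d (εn n) ξ y) i / εn n) : EuclideanSpace ℝ (Fin d))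
        = (WithLp.toLp 2 (fun i => y i + (ξ i : ℝ)) : EuclideanSpace ℝ (Fin d)) := by
      ext i
      show (εn n * (ξ i : ℝ) + εn n * y i) / εn n = y i + (ξ i : ℝ)
      rw [div_eq_iff (hεpos n).ne']
      ring
    show v n (cellMapE d (εn n) ξ y) * φ (cellMapE d (εn n) ξ y) _ = _
    rw [hcoord, hφper]
  -- almost-everywhere membership
  have haefull : ∀ᵐ p ∂μ, p ∈ Ω ×ˢ Γ := by
    have hcompl : (Ω ×ˢ Γ)ᶜ ⊆ ((Ωᶜ ×ˢ (Set.univ : Set (EuclideanSpace ℝ (Fin d))))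
        ∪ ((Set.univ : Set (EuclideanSpace ℝ (Fin d))) ×ˢ Γᶜ)) := by
      intro p hp
      simp only [Set.mem_compl_iff, Set.mem_prod, not_and] at hp
      by_cases h1 : p.1 ∈ Ω
      · exact Or.inr ⟨trivial, hp h1⟩
      · exact Or.inl ⟨h1, trivial⟩
    have h1 : μ ((Ωᶜ ×ˢ (Set.univ : Set (EuclideanSpace ℝ (Fin d))))) = 0 := by
      rw [hμdef, Measure.prod_prod, Measure.restrict_apply hΩm.compl,
        Set.compl_inter_self, measure_empty, zero_mul]
    have h2 : μ (((Set.univ : Set (EuclideanSpace ℝ (Fin d))) ×ˢ Γᶜ)) = 0 := by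
      rw [hμdef, Measure.prod_prod, Measure.restrict_apply hΓm.compl,
        Set.compl_inter_self, measure_empty, mul_zero]
    have hnull : μ ((Ω ×ˢ Γ)ᶜ) = 0 :=
      measure_mono_null hcompl (measure_union_null h1 h2)
    exact hnull
  -- L² convergence of the unfolded test functions
  have hΨconv : Tendsto (fun n => (hΦmem n).toLp (Φ n)) atTop (𝓝 Ψ) := by
    rw [Metric.tendsto_atTop]
    intro r hr
    set Mc := ((μ Set.univ) ^ ((2:ENNReal).toReal)⁻¹).toReal with hMc
    have hMc0 : 0 ≤ Mc := ENNReal.toReal_nonneg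
    have hδ : 0 < r / (2 * (Mc + 1)) := by positivity
    obtain ⟨η, hη0, hη1, hηp⟩ := hUC _ hδ
    have hb : (0:ℝ) < min (η / (Real.sqrt d + 1)) (ρ / (Real.sqrt d + 1)) := by positivity
    obtain ⟨N, hN⟩ := (Metric.tendsto_atTop.1 hεlim) _ hb
    refine ⟨N, fun n hn => ?_⟩
    have hεsmall := hN n hn
    rw [Real.dist_eq, sub_zero, abs_of_pos (hεpos n)] at hεsmall
    have hsd : (0:ℝ) < Real.sqrt d + 1 := by positivity
    have hεη : Real.sqrt d * εn n ≤ η := by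
      have h1 : εn n < η / (Real.sqrt d + 1) := lt_of_lt_of_le hεsmall (min_le_left _ _)
      have h2 := mul_lt_mul_of_pos_left h1 hsd
      rw [mul_div_cancel₀ _ hsd.ne'] at h2
      nlinarith [Real.sqrt_nonneg (d:ℝ), (hεpos n).le]
    have hερ : Real.sqrt d * εn n < ρ := by
      have h1 : εn n < ρ / (Real.sqrt d + 1) := lt_of_lt_of_le hεsmall (min_le_right _ _)
      have h2 := mul_lt_mul_of_pos_left h1 hsd
      rw [mul_div_cancel₀ _ hsd.ne'] at h2
      nlinarith [Real.sqrt_nonneg (d:ℝ), (hεpos n).le]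
    have hae2 : ∀ᵐ p ∂μ, ‖(Φ n - fun p : EuclideanSpace ℝ (Fin d) × EuclideanSpace ℝ (Fin d) =>
        φ p.1 p.2) p‖ ≤ r / (2 * (Mc + 1)) := by
      filter_upwards [haefull] with p hp
      obtain ⟨hpΩ, hpΓ⟩ := hp
      rw [Pi.sub_apply, Real.norm_eq_abs]
      simp only [hΦdef]
      by_cases hx : ∃ ξ ∈ Fn n,
          p ∈ cellSet d (εn n) ξ ×ˢ (Set.univ : Set (EuclideanSpace ℝ (Fin d)))
      · obtain ⟨ξ₀, hξ₀, hpξ⟩ := hx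
        rw [sum_indicator_unique (huniq n) _ hξ₀ hpξ]
        apply hηp _ _ _ hpΓ
        have hyc : ∀ i, (0:ℝ) ≤ p.2 i ∧ p.2 i ≤ 1 := by
          intro i
          have h1 := hΓsub hpΓ i
          exact ⟨h1.1.le, h1.2.le⟩
        have hx1 := hpξ.1
        have hcoordb : ∀ i, |(cellMapE d (εn n) ξ₀ p.2 - p.1) i| ≤ εn n := by
          intro i
          have h1 := hx1 i
          rw [Set.mem_Ico] at h1
          have h2 := hyc i
          show |εn n * (ξ₀ i : ℝ) + εn n * p.2 i - p.1 i| ≤ εn n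
          rw [abs_le]
          constructor <;> nlinarith [(hεpos n).le, h1.1, h1.2, h2.1, h2.2]
        rw [dist_eq_norm]
        exact (norm_le_of_coord (hεpos n).le hcoordb).trans hεη
      · push_neg at hx
        rw [sum_indicator_of_not_mem _ hx, zero_sub, abs_neg]
        have hxK : p.1 ∉ K := by
          intro hxK
          have hxcell := mem_cellSet_floor (hεpos n) p.1
          have hmemF : (fun i => ⌊p.1 i / εn n⌋) ∈ Fn n := by
            rw [hFnmem]
            rintro z ⟨yc, hyc, rfl⟩
            apply hρsub
            rw [Metric.mem_thickening_iff]
            refine ⟨p.1, hxK, ?_⟩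
            have hcb : ∀ i,
                |(cellMapE d (εn n) (fun i => ⌊p.1 i / εn n⌋) yc - p.1) i| ≤ εn n := by
              intro i
              have h1 := hxcell i
              rw [Set.mem_Ico] at h1
              have h2 := hyc i
              rw [Set.mem_Icc] at h2
              show |εn n * ((⌊p.1 i / εn n⌋ : ℤ) : ℝ) + εn n * yc i - p.1 i| ≤ εn n
              rw [abs_le]
              constructor <;> nlinarith [(hεpos n).le, h1.1, h1.2, h2.1, h2.2]
            rw [dist_eq_norm]
            exact lt_of_le_of_lt (norm_le_of_coord (hεpos n).le hcb) hερ
          exact hx _ hmemF ⟨hxcell, trivial⟩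
        rw [hK0 _ hxK]
        simpa using hδ.le
    have hsn := eLpNorm_le_of_ae_bound (p := (2:ENNReal)) (μ := μ) hae2
    have hdistb : dist ((hΦmem n).toLp (Φ n)) Ψ ≤ Mc * (r / (2 * (Mc + 1))) := by
      rw [dist_eq_norm, hΨdef, ← MemLp.toLp_sub (hΦmem n) hψmem]
      rw [Lp.norm_toLp _ ((hΦmem n).sub hψmem)]
      calc (eLpNorm (Φ n - fun p : EuclideanSpace ℝ (Fin d) × EuclideanSpace ℝ (Fin d)
              => φ p.1 p.2) 2 μ).toReal
          ≤ ((μ Set.univ ^ ((2:ENNReal).toReal)⁻¹)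
              * ENNReal.ofReal (r / (2 * (Mc + 1)))).toReal := by
            refine ENNReal.toReal_mono ?_ hsn
            exact ENNReal.mul_ne_top
              (ENNReal.rpow_ne_top_of_nonneg (by positivity) (measure_ne_top μ _))
              ENNReal.ofReal_ne_top
        _ = Mc * (r / (2 * (Mc + 1))) := by
            rw [ENNReal.toReal_mul, ENNReal.toReal_ofReal hδ.le]
    calc dist ((hΦmem n).toLp (Φ n)) Ψ ≤ Mc * (r / (2 * (Mc + 1))) := hdistb
      _ < r := by
        have hq : (0:ℝ) < 2 * (Mc + 1) := by positivity
        have h1 : Mc * (r / (2 * (Mc + 1))) < (2 * (Mc + 1)) * (r / (2 * (Mc + 1))) :=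
          mul_lt_mul_of_pos_right (by linarith) hδ
        have h2 : (2 * (Mc + 1)) * (r / (2 * (Mc + 1))) = r := by field_simp
        linarith
  -- pass to the limit
  have hfinal : Tendsto (fun k => (inner ℝ (U (σ k)) ((hΦmem (σ k)).toLp (Φ (σ k))) : ℝ)) atTop
      (𝓝 (inner ℝ w Ψ : ℝ)) := by
    have hsplit : (fun k => (inner ℝ (U (σ k)) ((hΦmem (σ k)).toLp (Φ (σ k))) : ℝ))
        = fun k => (inner ℝ (U (σ k)) ((hΦmem (σ k)).toLp (Φ (σ k)) - Ψ) : ℝ)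
            + (inner ℝ (U (σ k)) Ψ : ℝ) := by
      funext k
      rw [inner_sub_right]
      ring
    rw [hsplit]
    have h0 : Tendsto (fun k =>
        (inner ℝ (U (σ k)) ((hΦmem (σ k)).toLp (Φ (σ k)) - Ψ) : ℝ)) atTop (𝓝 0) := by
      apply squeeze_zero_norm
        (a := fun k => Real.sqrt C * dist ((hΦmem (σ k)).toLp (Φ (σ k))) Ψ)
      · intro k
        rw [Real.norm_eq_abs]
        refine (abs_real_inner_le_norm _ _).trans ?_
        rw [dist_eq_norm]
        exact mul_le_mul_of_nonneg_right (hUnorm _) (norm_nonneg _)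
      · have h1 : Tendsto (fun n => dist ((hΦmem n).toLp (Φ n)) Ψ) atTop (𝓝 0) :=
          tendsto_iff_dist_tendsto_zero.1 hΨconv
        have h2 := (h1.comp (hσ.tendsto_atTop)).const_mul (Real.sqrt C)
        simpa using h2
    have hadd := h0.add (hw Ψ)
    simpa using hadd
  -- identify the limit value
  have hrhs : (inner ℝ w Ψ : ℝ)
      = ∫ x in Ω, ∫ y in Γ,
          (w : EuclideanSpace ℝ (Fin d) × EuclideanSpace ℝ (Fin d) → ℝ) (x, y) * φ x y
          ∂μH[(d:ℝ)-1] := by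
    have h1 : (inner ℝ w Ψ : ℝ)
        = ∫ p, (w : EuclideanSpace ℝ (Fin d) × EuclideanSpace ℝ (Fin d) → ℝ) p
            * φ p.1 p.2 ∂μ := by
      rw [L2.inner_def]
      refine integral_congr_ae ?_
      have hc : (Ψ : EuclideanSpace ℝ (Fin d) × EuclideanSpace ℝ (Fin d) → ℝ)
          =ᵐ[μ] fun p => φ p.1 p.2 := by
        rw [hΨdef]
        exact hψmem.coeFn_toLp
      filter_upwards [hc] with p hp
      rw [hp]
      simp [RCLike.inner_apply, mul_comm]
    rw [h1]
    have hFint : Integrable (fun p =>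
        (w : EuclideanSpace ℝ (Fin d) × EuclideanSpace ℝ (Fin d) → ℝ) p * φ p.1 p.2) μ := by
      have h2 := L2.integrable_inner (𝕜 := ℝ) w Ψ
      refine h2.congr ?_
      have hc : (Ψ : EuclideanSpace ℝ (Fin d) × EuclideanSpace ℝ (Fin d) → ℝ)
          =ᵐ[μ] fun p => φ p.1 p.2 := by
        rw [hΨdef]
        exact hψmem.coeFn_toLp
      filter_upwards [hc] with p hp
      rw [hp]
      simp [RCLike.inner_apply, mul_comm]
    exact integral_prod _ hFint
  have heq : (fun k => εn (σ k) * ∫ x in membranes d (εn (σ k)) Ω Γ,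
      v (σ k) x * φ x (WithLp.toLp 2 (fun i => x i / εn (σ k)) : EuclideanSpace ℝ (Fin d)) ∂μH[(d:ℝ)-1])
      = fun k => (inner ℝ (U (σ k)) ((hΦmem (σ k)).toLp (Φ (σ k))) : ℝ) :=
    funext fun k => hLHSn (σ k)
  rw [heq, ← hrhs]
  exact hfinal
end

section
/- Moser–Alikakos iteration lemma (sequence form): Let C ≥ 1, b ≥ 0, M ≥ 0, and let (a_k)_{k≥0} be a sequence of nonnegative real numbers satisfying a_k ≤ (C · 2^{b k})^{1/2^k} · max{a_{k−1}, M} for every k ≥ 1. Then a_k ≤ C · 4^{b} · max{a_0, M} for every k ≥ 0; in particular the sequence (a_k) is bounded, uniformly in terms of C, b, a_0 and M only. -/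
/-- Moser–Alikakos iteration lemma (sequence form): if
`a_k ≤ (C·2^{bk})^{1/2^k} · max(a_{k−1}, M)` for all `k ≥ 1`, with `C ≥ 1`,
`b ≥ 0`, `M ≥ 0` and `a_k ≥ 0`, then `a_k ≤ C·4^b · max(a_0, M)` for all `k`. -/
theorem alikakos_iteration_lemma
    (C b M : ℝ) (hC : 1 ≤ C) (hb : 0 ≤ b) (hM : 0 ≤ M)
    (a : ℕ → ℝ) (ha : ∀ k, 0 ≤ a k)
    (hrec : ∀ k : ℕ, 1 ≤ k →
      a k ≤ (C * 2 ^ (b * (k : ℝ))) ^ ((1 : ℝ) / 2 ^ k) * max (a (k - 1)) M) :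
    ∀ k, a k ≤ C * 4 ^ b * max (a 0) M := by
  have hC0 : (0:ℝ) < C := lt_of_lt_of_le one_pos hC
  have h2 : ∀ k : ℕ, (0:ℝ) < 2 ^ k := fun k => by positivity
  have hm0 : 0 ≤ max (a 0) M := le_trans (ha 0) (le_max_left _ _)
  -- exponent bounds
  have hs0 : ∀ k : ℕ, (0:ℝ) ≤ 1 - 1 / (2:ℝ) ^ k := by
    intro k
    have : (1:ℝ) / 2 ^ k ≤ 1 := by
      rw [div_le_one (h2 k)]
      exact one_le_pow₀ (by norm_num)
    linarith
  have ht0 : ∀ k : ℕ, (0:ℝ) ≤ 2 - ((k:ℝ) + 2) / (2:ℝ) ^ k := by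
    intro k
    have hn : (k:ℝ) + 2 ≤ 2 * 2 ^ k := by
      have h1 : (k:ℝ) + 1 ≤ 2 ^ k := by
        exact_mod_cast Nat.lt_two_pow_self (n := k)
      have h2' : (1:ℝ) ≤ 2 ^ k := one_le_pow₀ (by norm_num)
      linarith
    rw [sub_nonneg, div_le_iff₀ (h2 k)]
    linarith
  have key : ∀ k : ℕ, a k ≤
      C ^ ((1:ℝ) - 1 / (2:ℝ) ^ k) * (2:ℝ) ^ (b * (2 - ((k:ℝ) + 2) / (2:ℝ) ^ k)) * max (a 0) M := by
    intro k
    induction k with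
    | zero =>
        norm_num
    | succ k ih =>
        have hk := hrec (k + 1) (by omega)
        simp only [Nat.add_sub_cancel] at hk
        -- factor from the induction hypothesis is ≥ 1
        have hone : (1:ℝ) ≤ C ^ ((1:ℝ) - 1 / (2:ℝ) ^ k) *
            (2:ℝ) ^ (b * (2 - ((k:ℝ) + 2) / (2:ℝ) ^ k)) := by
          have h1 : (1:ℝ) ≤ C ^ ((1:ℝ) - 1 / (2:ℝ) ^ k) := Real.one_le_rpow hC (hs0 k)
          have h2' : (1:ℝ) ≤ (2:ℝ) ^ (b * (2 - ((k:ℝ) + 2) / (2:ℝ) ^ k)) :=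
            Real.one_le_rpow (by norm_num) (mul_nonneg hb (ht0 k))
          nlinarith
        have hmax : max (a k) M ≤ C ^ ((1:ℝ) - 1 / (2:ℝ) ^ k) *
            (2:ℝ) ^ (b * (2 - ((k:ℝ) + 2) / (2:ℝ) ^ k)) * max (a 0) M := by
          refine max_le ih ?_
          calc M ≤ max (a 0) M := le_max_right _ _
            _ ≤ _ := le_mul_of_one_le_left hm0 hone
        have step : a (k + 1) ≤ (C * 2 ^ (b * (((k:ℕ) + 1 : ℕ) : ℝ))) ^ ((1 : ℝ) / 2 ^ (k + 1)) *
            (C ^ ((1:ℝ) - 1 / (2:ℝ) ^ k) *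
              (2:ℝ) ^ (b * (2 - ((k:ℝ) + 2) / (2:ℝ) ^ k)) * max (a 0) M) := by
          refine hk.trans ?_
          exact mul_le_mul_of_nonneg_left hmax (by positivity)
        refine step.trans (le_of_eq ?_)
        have hsplit : (C * 2 ^ (b * (((k:ℕ) + 1 : ℕ) : ℝ))) ^ ((1 : ℝ) / 2 ^ (k + 1)) =
            C ^ ((1:ℝ) / (2:ℝ) ^ (k + 1)) *
              (2:ℝ) ^ (b * ((k:ℝ) + 1) * ((1:ℝ) / (2:ℝ) ^ (k + 1))) := by
          rw [Real.mul_rpow hC0.le (Real.rpow_nonneg (by norm_num) _),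
            ← Real.rpow_mul (by norm_num : (0:ℝ) ≤ 2)]
          push_cast
          ring_nf
        rw [hsplit]
        rw [show C ^ ((1:ℝ) / (2:ℝ) ^ (k + 1)) *
              (2:ℝ) ^ (b * ((k:ℝ) + 1) * ((1:ℝ) / (2:ℝ) ^ (k + 1))) *
            (C ^ ((1:ℝ) - 1 / (2:ℝ) ^ k) *
              (2:ℝ) ^ (b * (2 - ((k:ℝ) + 2) / (2:ℝ) ^ k)) * max (a 0) M) =
            C ^ ((1:ℝ) / (2:ℝ) ^ (k + 1)) * C ^ ((1:ℝ) - 1 / (2:ℝ) ^ k) *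
            ((2:ℝ) ^ (b * ((k:ℝ) + 1) * ((1:ℝ) / (2:ℝ) ^ (k + 1))) *
              (2:ℝ) ^ (b * (2 - ((k:ℝ) + 2) / (2:ℝ) ^ k))) *
            max (a 0) M from by ring]
        rw [← Real.rpow_add hC0, ← Real.rpow_add (by norm_num : (0:ℝ) < 2)]
        have hne : (2:ℝ) ^ k ≠ 0 := (h2 k).ne'
        have e1 : (1:ℝ) / (2:ℝ) ^ (k + 1) + ((1:ℝ) - 1 / (2:ℝ) ^ k) =
            (1:ℝ) - 1 / (2:ℝ) ^ (k + 1) := by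
          rw [pow_succ]
          field_simp
          ring
        have e2 : b * ((k:ℝ) + 1) * ((1:ℝ) / (2:ℝ) ^ (k + 1)) +
            b * (2 - ((k:ℝ) + 2) / (2:ℝ) ^ k) =
            b * (2 - ((k:ℝ) + 1 + 2) / (2:ℝ) ^ (k + 1)) := by
          rw [pow_succ]
          field_simp
          ring
        push_cast
        rw [e1, e2]
  intro k
  refine (key k).trans ?_
  have h4 : (2:ℝ) ^ (2 * b) = 4 ^ b := by
    rw [Real.rpow_mul (by norm_num : (0:ℝ) ≤ 2)]
    norm_num
  have hA : C ^ ((1:ℝ) - 1 / (2:ℝ) ^ k) ≤ C := by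
    nth_rewrite 2 [← Real.rpow_one C]
    refine Real.rpow_le_rpow_of_exponent_le hC ?_
    have : (0:ℝ) ≤ 1 / (2:ℝ) ^ k := by positivity
    linarith
  have hB : (2:ℝ) ^ (b * (2 - ((k:ℝ) + 2) / (2:ℝ) ^ k)) ≤ (2:ℝ) ^ (2 * b) := by
    refine Real.rpow_le_rpow_of_exponent_le (by norm_num) ?_
    have hx : (0:ℝ) ≤ ((k:ℝ) + 2) / (2:ℝ) ^ k := by positivity
    nlinarith
  rw [← h4]
  exact mul_le_mul_of_nonneg_right
    (mul_le_mul hA hB (Real.rpow_nonneg (by norm_num) _) hC0.le) hm0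
end
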